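/- arXiv:1312.5299 — 6 statements merged into one kernel-verified Lean document; each statement's English description precedes it below -/
import Mathlib

section
/- (Virial Theorem for unitary operators) Let U be a unitary operator of class C¹(A) for a self-adjoint operator A. If φ is an eigenvector of U, then ⟨φ, (U*AU − A)φ⟩ = 0, where U*AU − A denotes the bounded extension of the commutator form. -/
open scoped ComplexInnerProductSpace
open ContinuousLinearMap

noncomputable section

variable {H : Type*} [NormedAddCommGroup H] [InnerProductSpace ℂ H] [CompleteSpace H]

/-- A bounded operator `B` is of class `C¹(A)` with commutator `ad_A(B) = B'` if the
sesquilinear form `(φ, ψ) ↦ ⟪Aφ, Bψ⟫ - ⟪φ, B(Aψ)⟫` on `D(A) × D(A)` is represented by the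
bounded operator `B'`. -/
def HasCommutator (A : H →ₗ.[ℂ] H) (B B' : H →L[ℂ] H) : Prop :=
  ∀ φ ψ : A.domain, ⟪A φ, B ψ⟫ - ⟪(φ : H), B (A ψ)⟫ = ⟪(φ : H), B' ψ⟫

section AuxLemmas

set_option linter.unusedSectionVars false
set_option maxHeartbeats 1000000

lemma selfadj_mem_and_eq {A : H →ₗ.[ℂ] H} (hA : IsSelfAdjoint A) (x w : H)
    (h : ∀ u : A.domain, ⟪w, (u : H)⟫ = ⟪x, A u⟫) :
    ∃ hm : x ∈ A.domain, A ⟨x, hm⟩ = w := by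
  have hd := hA.dense_domain
  have hA' : A.adjoint = A := hA
  have hx' : x ∈ A.adjoint.domain := LinearPMap.mem_adjoint_domain_of_exists _ ⟨w, h⟩
  have hm : x ∈ A.domain := by rw [← hA']; exact hx'
  refine ⟨hm, ?_⟩
  have h2 : A.adjoint ⟨x, hx'⟩ = w := LinearPMap.adjoint_apply_eq hd _ h
  have hle : A.adjoint ≤ A := le_of_eq hA'
  rw [← h2]
  exact (hle.2 (x := ⟨x, hx'⟩) (y := ⟨x, hm⟩) rfl).symm

lemma selfadj_symm {A : H →ₗ.[ℂ] H} (hA : IsSelfAdjoint A) (x y : A.domain) :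
    ⟪A x, (y : H)⟫ = ⟪(x : H), A y⟫ := by
  have hd := hA.dense_domain
  have hA' : A.adjoint = A := hA
  have hge : A ≤ A.adjoint := le_of_eq hA'.symm
  have := LinearPMap.adjoint_isFormalAdjoint hd (⟨(x : H), hge.1 x.2⟩ : A.adjoint.domain) y
  rwa [← hge.2 (x := x) (y := ⟨(x : H), hge.1 x.2⟩) rfl] at this

lemma selfadj_inner_self_real {A : H →ₗ.[ℂ] H} (hA : IsSelfAdjoint A) (x : A.domain) :
    (⟪A x, (x : H)⟫).im = 0 := by
  have h2 : (starRingEnd ℂ) ⟪A x, (x : H)⟫ = ⟪A x, (x : H)⟫ := by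
    rw [inner_conj_symm]; exact (selfadj_symm hA x x).symm
  exact Complex.conj_eq_iff_im.mp h2

lemma normsq_id {A : H →ₗ.[ℂ] H} (hA : IsSelfAdjoint A) (τ : ℝ) (x : A.domain) :
    ‖A x + (Complex.I * τ) • (x : H)‖ ^ 2 = ‖A x‖ ^ 2 + τ ^ 2 * ‖(x : H)‖ ^ 2 := by
  have hre : RCLike.re ⟪A x, (Complex.I * τ) • (x : H)⟫ = 0 := by
    rw [inner_smul_right]
    have him := selfadj_inner_self_real hA x
    simp only [RCLike.mul_re]
    simp [Complex.mul_re, Complex.mul_im, him]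
  have := @norm_add_sq ℂ _ _ _ _ (A x) ((Complex.I * τ) • (x : H))
  rw [this, hre, norm_smul]
  have : ‖Complex.I * (τ : ℂ)‖ = |τ| := by simp [norm_mul]
  rw [this]; ring_nf; rw [sq_abs]; ring

lemma lower_bound {A : H →ₗ.[ℂ] H} (hA : IsSelfAdjoint A) {τ : ℝ} (hτ : 0 ≤ τ) (x : A.domain) :
    τ * ‖(x : H)‖ ≤ ‖A x + (Complex.I * τ) • (x : H)‖ := by
  have h := normsq_id hA τ x
  nlinarith [norm_nonneg (A x), norm_nonneg ((x : H)), norm_nonneg (A x + (Complex.I * τ) • (x : H)),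
    mul_nonneg hτ (norm_nonneg ((x : H)))]

lemma upper_bound {A : H →ₗ.[ℂ] H} (hA : IsSelfAdjoint A) (τ : ℝ) (x : A.domain) :
    ‖A x‖ ≤ ‖A x + (Complex.I * τ) • (x : H)‖ := by
  have h := normsq_id hA τ x
  nlinarith [norm_nonneg (A x), norm_nonneg ((x : H)), norm_nonneg (A x + (Complex.I * τ) • (x : H)),
    sq_nonneg τ, sq_nonneg (τ * ‖(x : H)‖)]

/-- Surjectivity of `A + iτ` for a self-adjoint `A` and `τ > 0`. -/
lemma selfadj_surj {A : H →ₗ.[ℂ] H} (hA : IsSelfAdjoint A) {τ : ℝ} (hτ : 0 < τ) (y : H) :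
    ∃ x : A.domain, A x + (Complex.I * τ) • (x : H) = y := by
  classical
  set μ : ℂ := Complex.I * τ with hμ
  -- the operator L = A + μ as a linear map on the domain
  set L : A.domain →ₗ[ℂ] H := A.toFun + μ • A.domain.subtype with hL
  have hLdef : ∀ x : A.domain, L x = A x + μ • (x : H) := fun x => rfl
  set M : Submodule ℂ H := LinearMap.range L with hM
  -- M is sequentially closed, hence closed
  have hclosed : IsClosed (M : Set H) := by
    rw [← isSeqClosed_iff_isClosed]
    intro ys y hys hy
    choose xs hxs using hys
    have hcauchy : CauchySeq (fun n => ((xs n : H))) := by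
      have hyc : CauchySeq ys := hy.cauchySeq
      rw [Metric.cauchySeq_iff] at hyc ⊢
      intro ε hε
      obtain ⟨N, hN⟩ := hyc (τ * ε) (by positivity)
      refine ⟨N, fun m hm n hn => ?_⟩
      have hd : dist ((xs m : H)) ((xs n : H)) = ‖((xs m - xs n : A.domain) : H)‖ := by
        rw [dist_eq_norm]; norm_cast
      have hlb := lower_bound hA hτ.le (xs m - xs n)
      have hLs : A (xs m - xs n) + μ • ((xs m - xs n : A.domain) : H) = ys m - ys n := by
        rw [← hLdef]; rw [map_sub]; rw [hxs m, hxs n]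
      rw [hLs] at hlb
      have := hN m hm n hn
      rw [dist_eq_norm] at this
      rw [hd]
      calc ‖((xs m - xs n : A.domain) : H)‖ ≤ ‖ys m - ys n‖ / τ := by
            rw [le_div_iff₀ hτ]; linarith [hlb]
        _ < ε := by rw [div_lt_iff₀ hτ]; linarith [this]
    obtain ⟨x, hx⟩ := cauchySeq_tendsto_of_complete hcauchy
    -- A xs n = ys n - μ • xs n converges to y - μ • x
    have hAx : Filter.Tendsto (fun n => A (xs n)) Filter.atTop (nhds (y - μ • x)) := by
      have : (fun n => A (xs n)) = fun n => ys n - μ • ((xs n : H)) := by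
        funext n
        have := hxs n
        rw [hLdef] at this
        linear_combination (norm := module) this
      rw [this]
      exact hy.sub ((hx.const_smul μ))
    -- use the characterization
    have hchar : ∀ u : A.domain, ⟪y - μ • x, (u : H)⟫ = ⟪x, A u⟫ := by
      intro u
      have h1 : Filter.Tendsto (fun n => ⟪A (xs n), (u : H)⟫) Filter.atTop
          (nhds ⟪y - μ • x, (u : H)⟫) := hAx.inner tendsto_const_nhds
      have h2 : Filter.Tendsto (fun n => ⟪((xs n : H)), A u⟫) Filter.atTop
          (nhds ⟪x, A u⟫) := hx.inner tendsto_const_nhds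
      have heq : (fun n => ⟪A (xs n), (u : H)⟫) = fun n => ⟪((xs n : H)), A u⟫ := by
        funext n; exact selfadj_symm hA (xs n) u
      rw [heq] at h1
      exact tendsto_nhds_unique h1 h2
    obtain ⟨hm, heq⟩ := selfadj_mem_and_eq hA x (y - μ • x) hchar
    refine ⟨⟨x, hm⟩, ?_⟩
    rw [hLdef, heq]
    simp
  -- M is dense: its orthogonal complement is trivial
  have horth : Mᗮ = ⊥ := by
    rw [Submodule.eq_bot_iff]
    intro z hz
    have hz' : ∀ u : A.domain, ⟪A u + μ • (u : H), z⟫ = 0 := by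
      intro u
      exact hz (L u) ⟨u, rfl⟩
    have hchar : ∀ u : A.domain, ⟪μ • z, (u : H)⟫ = ⟪z, A u⟫ := by
      intro u
      have h := hz' u
      rw [inner_add_left, inner_smul_left] at h
      have h2 : ⟪z, A u⟫ = -(μ * ⟪z, (u : H)⟫) := by
        have := congrArg (starRingEnd ℂ) h
        simp only [map_add, map_mul, inner_conj_symm, RingHomCompTriple.comp_apply,
          RingHom.id_apply, map_zero, Complex.conj_conj] at this
        linear_combination this
      have hμconj : (starRingEnd ℂ) μ = -μ := by
        simp [hμ, Complex.ext_iff]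
      rw [inner_smul_left, h2, hμconj]; ring
    obtain ⟨hm, heq⟩ := selfadj_mem_and_eq hA z (μ • z) hchar
    -- symmetry at z forces z = 0
    have hsym := selfadj_symm hA ⟨z, hm⟩ ⟨z, hm⟩
    rw [heq] at hsym
    simp only [inner_smul_left, inner_smul_right] at hsym
    have hμconj : (starRingEnd ℂ) μ = -μ := by simp [hμ, Complex.ext_iff]
    rw [hμconj] at hsym
    have hμ0 : μ ≠ 0 := by
      simp [hμ, Complex.ext_iff]; positivity
    have hinner : μ * ⟪z, z⟫ = 0 := by linear_combination (-(1:ℂ)/2) * hsym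
    exact inner_self_eq_zero.mp ((mul_eq_zero.mp hinner).resolve_left hμ0)
  have hcompl : M = ⊤ := by
    have : CompleteSpace M := hclosed.completeSpace_coe
    exact Submodule.orthogonal_eq_bot_iff.mp horth
  have hy : y ∈ M := by rw [hcompl]; trivial
  obtain ⟨x, hx⟩ := hy
  exact ⟨x, hx⟩

lemma U_mem_domain {A : H →ₗ.[ℂ] H} (hA : IsSelfAdjoint A) {U U' : H →L[ℂ] H}
    (hC : HasCommutator A U U') (ψ : A.domain) :
    ∃ hm : U (ψ : H) ∈ A.domain, A ⟨U (ψ : H), hm⟩ = U (A ψ) + U' (ψ : H) := by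
  apply selfadj_mem_and_eq hA
  intro u
  have h := hC u ψ
  have h2 := congrArg (starRingEnd ℂ) h
  simp only [map_sub, inner_conj_symm] at h2
  rw [inner_add_left]
  linear_combination -h2

end AuxLemmas


/-- A unitary operator on a Hilbert space. -/
def IsUnitaryCLM (U : H →L[ℂ] H) : Prop :=
  adjoint U ∘L U = 1 ∧ U ∘L adjoint U = 1

/-- **Virial theorem for unitary operators.** If `U` is a unitary operator of class
`C¹(A)` and `φ` is an eigenvector of `U`, then `⟪φ, (U*AU - A)φ⟫ = 0`, where
`U*AU - A = U* ∘ ad_A(U)`. -/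
theorem virial_unitary
    (A : H →ₗ.[ℂ] H) (hA : IsSelfAdjoint A)
    (U U' : H →L[ℂ] H) (hU : IsUnitaryCLM U)
    (hC : HasCommutator A U U')
    (φ : H) (hφ : φ ≠ 0) (c : ℂ) (heig : U φ = c • φ) :
    ⟪φ, (adjoint U ∘L U') φ⟫ = 0 := by
  classical
  have hd := hA.dense_domain
  -- facts about the eigenvalue c
  have hUadU : ∀ x : H, adjoint U (U x) = x := by
    intro x
    have h := congrArg (fun T : H →L[ℂ] H => T x) hU.1
    simpa using h
  have hφφ : ⟪φ, φ⟫ ≠ (0 : ℂ) := by simpa [inner_self_eq_zero] using hφ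
  have hcc : (starRingEnd ℂ) c * c = 1 := by
    have h1 : ⟪U φ, U φ⟫ = ⟪φ, φ⟫ := by
      rw [← adjoint_inner_left, hUadU]
    rw [heig, inner_smul_left, inner_smul_right] at h1
    have h2 : ((starRingEnd ℂ) c * c - 1) * ⟪φ, φ⟫ = 0 := by linear_combination h1
    have h3 := (mul_eq_zero.mp h2).resolve_right hφφ
    linear_combination h3
  have hUadφ : adjoint U φ = (starRingEnd ℂ) c • φ := by
    have h := hUadU φ
    rw [heig, map_smul] at h
    calc adjoint U φ = ((starRingEnd ℂ) c * c) • adjoint U φ := by rw [hcc, one_smul]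
      _ = (starRingEnd ℂ) c • (c • adjoint U φ) := by rw [mul_smul]
      _ = (starRingEnd ℂ) c • φ := by rw [h]
  have hφU : ∀ x : H, ⟪φ, U x⟫ = c * ⟪φ, x⟫ := by
    intro x
    rw [← adjoint_inner_left, hUadφ, inner_smul_left, Complex.conj_conj]
  -- regularization sequence
  set τ : ℕ → ℝ := fun n => (n : ℝ) + 1 with hτdef
  set μ : ℕ → ℂ := fun n => Complex.I * ((τ n : ℝ) : ℂ) with hμdef
  have hτpos : ∀ n : ℕ, (0 : ℝ) < τ n := fun n => by positivity
  have hμconj : ∀ n, (starRingEnd ℂ) (μ n) = -μ n := by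
    intro n; simp [hμdef, Complex.ext_iff]
  have hμnorm : ∀ n, ‖μ n‖ = τ n := by
    intro n; simp [hμdef, norm_mul, abs_of_pos (hτpos n)]
  choose R hR using fun (n : ℕ) (y : H) => selfadj_surj hA (hτpos n) y
  set r : ℕ → A.domain := fun n => R n φ with hrdef
  have hr : ∀ n, A (r n) + μ n • ((r n : H)) = φ := fun n => hR n φ
  set e : ℕ → H := fun n => A (r n) with hedef
  have he : ∀ n, e n = φ - μ n • ((r n : H)) := by
    intro n
    have h := hr n
    linear_combination (norm := module) h
  set Φ : ℕ → A.domain := fun n => μ n • r n with hΦdef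
  have hΦcoe : ∀ n, ((Φ n : H)) = μ n • ((r n : H)) := fun n => rfl
  have hAΦ : ∀ n, A (Φ n) = μ n • e n := fun n => A.map_smul _ (r n)
  have hΦφ : ∀ n, ((Φ n : H)) = φ - e n := by
    intro n
    rw [hΦcoe n, he n]
    module
  have hrb : ∀ n, τ n * ‖((r n : H))‖ ≤ ‖φ‖ := by
    intro n
    have h := lower_bound hA (hτpos n).le (r n)
    rwa [hr n] at h
  -- the commutator correction vector d
  choose Um hUm using fun (n : ℕ) => U_mem_domain hA hC (r n)
  set d : ℕ → A.domain := fun n => (⟨U ((r n : H)), Um n⟩ : A.domain) - c • r n with hddef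
  have hdcoe : ∀ n, ((d n : H)) = U ((r n : H)) - c • ((r n : H)) := fun n => rfl
  have hdA : ∀ n, A (d n) + μ n • ((d n : H)) = U' ((r n : H)) := by
    intro n
    have h1 : U (A (r n)) + μ n • U ((r n : H)) = c • φ := by
      have h := congrArg U (hr n)
      rw [map_add, map_smul, heig] at h
      exact h
    have h2 : A (d n) = U (A (r n)) + U' ((r n : H)) - c • A (r n) := by
      rw [hddef]
      simp only []
      rw [A.map_sub, A.map_smul, hUm n]
    rw [h2, hdcoe n]
    have h3 := hr n
    linear_combination (norm := module) h1 - c • h3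
  have hdb : ∀ n, τ n * ‖((d n : H))‖ ≤ ‖U'‖ * ‖φ‖ / τ n := by
    intro n
    have h := lower_bound hA (hτpos n).le (d n)
    rw [hdA n] at h
    have h2 : ‖U' ((r n : H))‖ ≤ ‖U'‖ * ‖((r n : H))‖ := U'.le_opNorm _
    have h3 : ‖((r n : H))‖ ≤ ‖φ‖ / τ n := by
      rw [le_div_iff₀ (hτpos n)]
      linarith [hrb n]
    calc τ n * ‖((d n : H))‖ ≤ ‖U' ((r n : H))‖ := h
      _ ≤ ‖U'‖ * ‖((r n : H))‖ := h2
      _ ≤ ‖U'‖ * (‖φ‖ / τ n) := by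
          apply mul_le_mul_of_nonneg_left h3 (norm_nonneg _)
      _ = ‖U'‖ * ‖φ‖ / τ n := by ring
  -- key identity : U e - c e = -μ d
  have hUE : ∀ n, U (e n) - c • e n = -(μ n) • ((d n : H)) := by
    intro n
    have h1 : U (e n) = c • φ - μ n • U ((r n : H)) := by
      rw [he n, map_sub, map_smul, heig]
    rw [h1, he n, hdcoe n]
    module
  -- the main algebraic identity
  have hQ : ∀ n, ⟪((Φ n : H)), U' ((Φ n : H))⟫ = 2 * μ n * ⟪e n, U (e n) - c • e n⟫ := by
    intro n
    have hsym0 : ⟪e n, ((Φ n : H))⟫ + ⟪((Φ n : H)), e n⟫ = 0 := by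
      rw [hΦcoe n, inner_smul_right, inner_smul_left, hμconj n]
      have hs := selfadj_symm hA (r n) (r n)
      show μ n * ⟪A (r n), ((r n : H))⟫ + -μ n * ⟪((r n : H)), A (r n)⟫ = 0
      rw [hs]; ring
    have hpq : ⟪e n, φ⟫ + ⟪φ, e n⟫ = 2 * ⟪e n, e n⟫ := by
      have hφeq : φ = ((Φ n : H)) + e n := by
        rw [hΦφ n]; module
      rw [hφeq, inner_add_right, inner_add_left]
      linear_combination hsym0
    have hL : ⟪A (Φ n), U ((Φ n : H))⟫ - ⟪((Φ n : H)), U (A (Φ n))⟫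
        = 2 * μ n * ⟪e n, U (e n) - c • e n⟫ := by
      rw [hAΦ n, hΦφ n]
      simp only [map_sub, map_smul, heig, inner_sub_left, inner_sub_right,
        inner_smul_left, inner_smul_right, hμconj n, hφU]
      linear_combination (-(μ n) * c) * hpq
    exact (hC (Φ n) (Φ n)).symm.trans hL
  -- bound on the quadratic form at Φ n
  have hQb : ∀ n, ‖⟪((Φ n : H)), U' ((Φ n : H))⟫‖ ≤ 2 * (‖U'‖ * ‖φ‖) * ‖e n‖ := by
    intro n
    rw [hQ n, hUE n, inner_smul_right]
    have h4 : ‖(2 : ℂ) * μ n * (-μ n * ⟪e n, ((d n : H))⟫)‖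
        = 2 * (τ n * (τ n * ‖⟪e n, ((d n : H))⟫‖)) := by
      simp only [norm_mul, norm_neg, hμnorm n]
      norm_num
      ring
    rw [h4]
    have h1 : ‖⟪e n, ((d n : H))⟫‖ ≤ ‖e n‖ * ‖((d n : H))‖ := norm_inner_le_norm _ _
    have h2 := hdb n
    have hτ := hτpos n
    have h5 : τ n * τ n * ‖((d n : H))‖ ≤ ‖U'‖ * ‖φ‖ := by
      have := mul_le_mul_of_nonneg_left h2 hτ.le
      calc τ n * τ n * ‖((d n : H))‖ = τ n * (τ n * ‖((d n : H))‖) := by ring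
        _ ≤ τ n * (‖U'‖ * ‖φ‖ / τ n) := this
        _ = ‖U'‖ * ‖φ‖ := by field_simp
    have hen : (0:ℝ) ≤ ‖e n‖ := norm_nonneg _
    have hdn : (0:ℝ) ≤ ‖((d n : H))‖ := norm_nonneg _
    nlinarith [h1, h5, mul_le_mul_of_nonneg_left h1 (mul_nonneg hτ.le hτ.le)]
  -- comparison between the form at φ and at Φ n
  have hXb : ∀ n, ‖⟪φ, U' φ⟫‖ ≤ 4 * (‖U'‖ * ‖φ‖) * ‖e n‖ := by
    intro n
    have hdiff : ⟪φ, U' φ⟫ - ⟪((Φ n : H)), U' ((Φ n : H))⟫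
        = ⟪e n, U' φ⟫ + ⟪((Φ n : H)), U' (e n)⟫ := by
      rw [hΦφ n]
      simp only [map_sub, inner_sub_left, inner_sub_right]
      ring
    have hΦnorm : ‖((Φ n : H))‖ ≤ ‖φ‖ := by
      rw [hΦcoe n, norm_smul, hμnorm n]
      exact hrb n
    have h1 : ‖⟪e n, U' φ⟫‖ ≤ ‖e n‖ * (‖U'‖ * ‖φ‖) := by
      calc ‖⟪e n, U' φ⟫‖ ≤ ‖e n‖ * ‖U' φ‖ := norm_inner_le_norm _ _
        _ ≤ ‖e n‖ * (‖U'‖ * ‖φ‖) :=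
          mul_le_mul_of_nonneg_left (U'.le_opNorm φ) (norm_nonneg _)
    have h2 : ‖⟪((Φ n : H)), U' (e n)⟫‖ ≤ ‖φ‖ * (‖U'‖ * ‖e n‖) := by
      calc ‖⟪((Φ n : H)), U' (e n)⟫‖ ≤ ‖((Φ n : H))‖ * ‖U' (e n)‖ := norm_inner_le_norm _ _
        _ ≤ ‖φ‖ * (‖U'‖ * ‖e n‖) := by
          apply mul_le_mul hΦnorm (U'.le_opNorm (e n)) (norm_nonneg _) (norm_nonneg _)
    calc ‖⟪φ, U' φ⟫‖
        ≤ ‖⟪φ, U' φ⟫ - ⟪((Φ n : H)), U' ((Φ n : H))⟫‖ + ‖⟪((Φ n : H)), U' ((Φ n : H))⟫‖ := by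
          have := norm_sub_norm_le (⟪φ, U' φ⟫) (⟪((Φ n : H)), U' ((Φ n : H))⟫)
          have h := norm_add_le (⟪φ, U' φ⟫ - ⟪((Φ n : H)), U' ((Φ n : H))⟫)
            (⟪((Φ n : H)), U' ((Φ n : H))⟫)
          simpa using h
      _ ≤ (‖e n‖ * (‖U'‖ * ‖φ‖) + ‖φ‖ * (‖U'‖ * ‖e n‖)) + 2 * (‖U'‖ * ‖φ‖) * ‖e n‖ := by
          apply add_le_add _ (hQb n)
          rw [hdiff]
          exact (norm_add_le _ _).trans (add_le_add h1 h2)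
      _ = 4 * (‖U'‖ * ‖φ‖) * ‖e n‖ := by ring
  -- bound on e n via density of the domain
  have heb : ∀ (ψ : A.domain) (n : ℕ), ‖e n‖ ≤ ‖φ - ψ‖ + ‖A ψ‖ / τ n := by
    intro ψ n
    set t : A.domain := R n (φ - ψ) with htdef
    have ht : A t + μ n • ((t : H)) = φ - ψ := hR n _
    set s : A.domain := r n - t with hsdef
    have hs : A s + μ n • ((s : H)) = (ψ : H) := by
      rw [hsdef, A.map_sub]
      have hcoe : ((r n - t : A.domain) : H) = ((r n : H)) - ((t : H)) := rfl
      rw [hcoe]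
      have h1 := hr n
      linear_combination (norm := module) h1 - ht
    set s' : A.domain := ψ - μ n • s with hs'def
    have hs'c : ((s' : H)) = A s := by
      have hcoe : ((s' : H)) = (ψ : H) - μ n • ((s : H)) := rfl
      rw [hcoe]
      linear_combination (norm := module) (-1 : ℂ) • hs
    have hAs' : A s' + μ n • ((s' : H)) = A ψ := by
      rw [hs'def, A.map_sub, A.map_smul]
      rw [hs'def] at hs'c
      rw [hs'c]
      module
    have hb1 : τ n * ‖((s' : H))‖ ≤ ‖A ψ‖ := by
      have h := lower_bound hA (hτpos n).le s'
      rwa [hAs'] at h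
    have hb2 : ‖A s‖ ≤ ‖A ψ‖ / τ n := by
      rw [le_div_iff₀ (hτpos n), ← hs'c]
      linarith [hb1]
    have hb3 : ‖A t‖ ≤ ‖φ - ψ‖ := by
      have h := upper_bound hA (τ n) t
      rwa [ht] at h
    have hsplit : e n = A t + A s := by
      rw [hedef]
      simp only []
      have : r n = t + s := by rw [hsdef]; abel
      rw [this, A.map_add]
    rw [hsplit]
    exact (norm_add_le _ _).trans (add_le_add hb3 hb2)
  -- conclude that the form at φ vanishes
  have hX0 : ⟪φ, U' φ⟫ = 0 := by
    rw [← norm_eq_zero]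
    have hnn : (0:ℝ) ≤ ‖⟪φ, U' φ⟫‖ := norm_nonneg _
    have hle : ‖⟪φ, U' φ⟫‖ ≤ 0 := by
      apply le_of_forall_pos_le_add
      intro ε hε
      set C : ℝ := 4 * (‖U'‖ * ‖φ‖) + 1 with hCdef
      have hC : 0 < C := by positivity
      set ε' : ℝ := ε / (2 * C) with hε'def
      have hε' : 0 < ε' := by positivity
      obtain ⟨ψ0, hψ0, hψd⟩ := Metric.mem_closure_iff.mp (hd φ) ε' hε'
      set ψ : A.domain := ⟨ψ0, hψ0⟩ with hψdef
      obtain ⟨n, hn⟩ := exists_nat_gt (‖A ψ‖ / ε')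
      have hτn : ‖A ψ‖ / τ n < ε' := by
        rw [div_lt_iff₀ (hτpos n)]
        have h0 : ‖A ψ‖ / ε' < τ n := by
          have : (n : ℝ) ≤ τ n := by simp [hτdef]
          linarith
        rw [div_lt_iff₀ hε'] at h0
        linarith [h0]
      have hψφ : ‖φ - (ψ : H)‖ < ε' := by
        rw [← dist_eq_norm]
        exact hψd
      have he_small : ‖e n‖ ≤ 2 * ε' := by
        have := heb ψ n
        linarith [this, hτn.le, hψφ.le]
      have h1 := hXb n
      have h2 : 4 * (‖U'‖ * ‖φ‖) * ‖e n‖ ≤ C * (2 * ε') := by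
        apply mul_le_mul _ he_small (norm_nonneg _) hC.le
        rw [hCdef]; linarith
      have h3 : C * (2 * ε') = ε := by
        rw [hε'def]; field_simp
      linarith
    linarith
  -- final computation
  rw [ContinuousLinearMap.comp_apply, adjoint_inner_right, heig, inner_smul_left, hX0, mul_zero]
end
end

section
/- Let A be a self-adjoint operator and B a bounded self-adjoint operator in C¹(A). For each ε ∈ [−1,1], the sesquilinear form Q_ε(φ,ψ) = ⟨Aφ, e^{εB}ψ⟩ − ⟨e^{εB}φ, Aψ⟩ on D(A)×D(A) extends to a bounded form on H×H, and there is a constant C > 0 such that |Q_ε(φ,ψ)| ≤ C·|ε|·‖[A,B]‖·‖e^{εB}φ‖·‖ψ‖ for all φ, ψ ∈ H and all ε ∈ [−1,1]. -/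
open scoped ComplexInnerProductSpace
open ContinuousLinearMap

noncomputable section

variable {H : Type*} [NormedAddCommGroup H] [InnerProductSpace ℂ H] [CompleteSpace H]

namespace ExpCommAux

lemma pmap_apply_congr {S T : H →ₗ.[ℂ] H} (h : S = T) {x : H} (hx : x ∈ S.domain)
    (hx' : x ∈ T.domain) : S ⟨x, hx⟩ = T ⟨x, hx'⟩ := by subst h; rfl

/-- The iterated commutator `[A, Bⁿ]` built from `B' = [A,B]`. -/
def Cseq (B B' : H →L[ℂ] H) : ℕ → (H →L[ℂ] H)
  | 0 => 0
  | (n + 1) => B ∘L Cseq B B' n + B' ∘L B ^ n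

lemma pow_norm_le (B : H →L[ℂ] H) (n : ℕ) : ‖(B : H →L[ℂ] H) ^ n‖ ≤ (‖B‖ + 1) ^ n := by
  induction n with
  | zero =>
    simp only [pow_zero]
    rw [ContinuousLinearMap.one_def]
    exact ContinuousLinearMap.norm_id_le
  | succ n ih =>
    calc ‖(B : H →L[ℂ] H) ^ (n + 1)‖ = ‖(B : H →L[ℂ] H) ^ n * B‖ := by rw [pow_succ]
      _ ≤ ‖(B : H →L[ℂ] H) ^ n‖ * ‖B‖ := norm_mul_le _ _
      _ ≤ (‖B‖ + 1) ^ n * (‖B‖ + 1) :=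
          mul_le_mul ih (by linarith [norm_nonneg B]) (norm_nonneg _) (by positivity)
      _ = (‖B‖ + 1) ^ (n + 1) := by rw [pow_succ]

lemma Cseq_norm (B B' : H →L[ℂ] H) (n : ℕ) :
    ‖Cseq B B' n‖ ≤ n * ‖B'‖ * (‖B‖ + 1) ^ n := by
  induction n with
  | zero => simp [Cseq]
  | succ n ih =>
    have hM1 : (1 : ℝ) ≤ ‖B‖ + 1 := by linarith [norm_nonneg B]
    have hMn : (0:ℝ) ≤ (‖B‖ + 1) ^ n := by positivity
    have hBn : ‖(B : H →L[ℂ] H) ^ n‖ ≤ (‖B‖ + 1) ^ n := pow_norm_le B n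
    have step1 : ‖Cseq B B' (n + 1)‖ ≤ ‖B‖ * ‖Cseq B B' n‖ + ‖B'‖ * ‖(B : H →L[ℂ] H) ^ n‖ := by
      calc ‖Cseq B B' (n + 1)‖ ≤ ‖B ∘L Cseq B B' n‖ + ‖B' ∘L B ^ n‖ := norm_add_le _ _
        _ ≤ ‖B‖ * ‖Cseq B B' n‖ + ‖B'‖ * ‖(B : H →L[ℂ] H) ^ n‖ :=
            add_le_add (opNorm_comp_le _ _) (opNorm_comp_le _ _)
    have step2 : ‖B‖ * ‖Cseq B B' n‖ ≤ (‖B‖ + 1) * (n * ‖B'‖ * (‖B‖ + 1) ^ n) :=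
      mul_le_mul (by linarith) ih (norm_nonneg _) (by linarith)
    have step3 : ‖B'‖ * ‖(B : H →L[ℂ] H) ^ n‖ ≤ ‖B'‖ * (‖B‖ + 1) ^ n :=
      mul_le_mul_of_nonneg_left hBn (norm_nonneg _)
    have step4 : (‖B‖ + 1) * (n * ‖B'‖ * (‖B‖ + 1) ^ n) + ‖B'‖ * (‖B‖ + 1) ^ n
        ≤ (n + 1 : ℕ) * ‖B'‖ * (‖B‖ + 1) ^ (n + 1) := by
      rw [pow_succ]
      push_cast
      nlinarith [mul_nonneg (mul_nonneg (norm_nonneg B') hMn) (norm_nonneg B)]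
    linarith

lemma pres (A : H →ₗ.[ℂ] H) (hA : IsSelfAdjoint A)
    (B B' : H →L[ℂ] H) (hB : HasCommutator A B B') (y : A.domain) :
    ∃ h : B ↑y ∈ A.domain, A ⟨B ↑y, h⟩ = B (A y) + B' ↑y := by
  have hT : Dense (A.domain : Set H) := hA.dense_domain
  have hAeq : A.adjoint = A := hA
  have key : ∀ x : A.domain, ⟪(B (A y) + B' ↑y : H), (x : H)⟫ = ⟪(B ↑y : H), A x⟫ := by
    intro x
    have h1 : ⟪A x, B ↑y⟫ - ⟪(x : H), B (A y)⟫ = ⟪(x : H), B' ↑y⟫ := hB x y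
    have h2 := congrArg (starRingEnd ℂ) h1
    simp only [map_sub, inner_conj_symm] at h2
    rw [inner_add_left]
    linear_combination -h2
  have hmem' : B ↑y ∈ A.adjoint.domain :=
    LinearPMap.mem_adjoint_domain_of_exists _ ⟨_, key⟩
  have hdom : A.adjoint.domain = A.domain := congrArg LinearPMap.domain hAeq
  have hmem : B ↑y ∈ A.domain := (SetLike.ext_iff.mp hdom _).mp hmem'
  refine ⟨hmem, ?_⟩
  rw [← pmap_apply_congr hAeq hmem' hmem]
  exact LinearPMap.adjoint_apply_eq hT ⟨B ↑y, hmem'⟩ key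

lemma pow_pres (A : H →ₗ.[ℂ] H) (hA : IsSelfAdjoint A)
    (B B' : H →L[ℂ] H) (hB : HasCommutator A B B') (n : ℕ) (y : A.domain) :
    ∃ h : (B ^ n) ↑y ∈ A.domain,
      A ⟨(B ^ n) ↑y, h⟩ = (B ^ n) (A y) + Cseq B B' n ↑y := by
  induction n with
  | zero =>
    refine ⟨by simpa using y.2, ?_⟩
    have hy : (⟨(B ^ 0) ↑y, by simpa using y.2⟩ : A.domain) = y := by
      ext; simp
    rw [hy]
    simp [Cseq]
  | succ n ih =>
    obtain ⟨hn, hAn⟩ := ih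
    set z : A.domain := ⟨(B ^ n) ↑y, hn⟩ with hz
    obtain ⟨hzmem, hAz⟩ := pres A hA B B' hB z
    have hcoe : (B ^ (n + 1)) ↑y = B ((B ^ n) ↑y) := by
      rw [pow_succ']; rfl
    have hmem : (B ^ (n + 1)) ↑y ∈ A.domain := by rw [hcoe]; exact hzmem
    refine ⟨hmem, ?_⟩
    have heq : (⟨(B ^ (n + 1)) ↑y, hmem⟩ : A.domain) = ⟨B ↑z, hzmem⟩ := by
      ext; exact hcoe
    rw [heq, hAz, hAn]
    simp only [map_add, Cseq, ContinuousLinearMap.add_apply, ContinuousLinearMap.comp_apply]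
    have : (B ^ (n + 1)) (A y) = B ((B ^ n) (A y)) := by rw [pow_succ']; rfl
    rw [this]
    abel

end ExpCommAux

open ExpCommAux in
/-- For a bounded self-adjoint `B ∈ C¹(A)`, the forms
`Q_ε(φ, ψ) = ⟪Aφ, e^{εB}ψ⟫ - ⟪e^{εB}φ, Aψ⟫` extend to bounded forms, with
`|Q_ε(φ, ψ)| ≤ C |ε| ‖[A,B]‖ ‖e^{εB}φ‖ ‖ψ‖`, uniformly in `ε ∈ [-1,1]`. -/
theorem exp_commutator_form_estimate
    (A : H →ₗ.[ℂ] H) (hA : IsSelfAdjoint A)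
    (B B' : H →L[ℂ] H) (hBsa : IsSelfAdjoint B)
    (hB : HasCommutator A B B') :
    ∃ C > (0 : ℝ), ∀ ε ∈ Set.Icc (-1 : ℝ) 1, ∃ Q : H →L[ℂ] H,
      (∀ φ ψ : A.domain,
        ⟪A φ, NormedSpace.exp ((ε : ℂ) • B) ψ⟫
          - ⟪NormedSpace.exp ((ε : ℂ) • B) φ, A ψ⟫ = ⟪(φ : H), Q ψ⟫) ∧
      ∀ φ ψ : H,
        ‖⟪φ, Q ψ⟫‖ ≤ C * |ε| * ‖B'‖ * ‖NormedSpace.exp ((ε : ℂ) • B) φ‖ * ‖ψ‖ := by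
  have hT : Dense (A.domain : Set H) := hA.dense_domain
  have hAeq : A.adjoint = A := hA
  -- symmetry of A
  have hsymm : ∀ x y : A.domain, ⟪A x, (y : H)⟫ = ⟪(x : H), A y⟫ := by
    have h := LinearPMap.adjoint_isFormalAdjoint hT
    rw [hAeq] at h
    exact h
  set M2 : ℝ := 2 * (‖B‖ + 1) with hM2def
  have hM2 : 0 ≤ M2 := by positivity
  have hg : Summable (fun n : ℕ => M2 ^ n / (Nat.factorial n : ℝ)) := Real.summable_pow_div_factorial M2
  set K : ℝ := ∑' n : ℕ, M2 ^ n / (Nat.factorial n : ℝ) with hKdef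
  have hK0 : 0 ≤ K := tsum_nonneg fun n => by positivity
  refine ⟨K * K + 1, by positivity, ?_⟩
  intro ε hε
  have hε1 : |ε| ≤ 1 := abs_le.mpr hε
  set E : H →L[ℂ] H := NormedSpace.exp ((ε : ℂ) • B) with hEdef
  set c : ℕ → ℂ := fun n => ((Nat.factorial n : ℂ))⁻¹ * (ε : ℂ) ^ n with hcdef
  set f : ℕ → (H →L[ℂ] H) := fun n => c n • Cseq B B' n with hfdef
  -- bound on the coefficients
  have hcnorm : ∀ n : ℕ, ‖c n‖ = ((Nat.factorial n : ℝ))⁻¹ * |ε| ^ n := by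
    intro n
    simp [hcdef, norm_mul, norm_pow, Complex.norm_real, abs_of_nonneg,
      Nat.cast_pos.mpr (Nat.factorial_pos n), le_of_lt]
  have hbound : ∀ n : ℕ, ‖f n‖ ≤ |ε| * ‖B'‖ * (M2 ^ n / (Nat.factorial n : ℝ)) := by
    intro n
    rw [hfdef]
    simp only [norm_smul, hcnorm]
    match n with
    | 0 => simp [Cseq]; positivity
    | (m + 1) =>
      have h1 : |ε| ^ (m + 1) ≤ |ε| := by
        calc |ε| ^ (m + 1) ≤ |ε| ^ 1 := pow_le_pow_of_le_one (abs_nonneg ε) hε1 (by omega)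
          _ = |ε| := pow_one _
      have h2 : ‖Cseq B B' (m + 1)‖ ≤ ‖B'‖ * M2 ^ (m + 1) := by
        calc ‖Cseq B B' (m + 1)‖ ≤ (m + 1 : ℕ) * ‖B'‖ * (‖B‖ + 1) ^ (m + 1) :=
              Cseq_norm B B' (m + 1)
          _ ≤ 2 ^ (m + 1) * ‖B'‖ * (‖B‖ + 1) ^ (m + 1) := by
              gcongr
              exact_mod_cast (Nat.lt_two_pow_self (n := m + 1)).le
          _ = ‖B'‖ * M2 ^ (m + 1) := by rw [hM2def, mul_pow]; ring
      have hfac : (0:ℝ) < (Nat.factorial (m+1) : ℝ) := by exact_mod_cast (m + 1).factorial_pos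
      calc (((Nat.factorial (m+1) : ℝ))⁻¹ * |ε| ^ (m+1)) * ‖Cseq B B' (m+1)‖
          ≤ ((Nat.factorial (m+1) : ℝ))⁻¹ * |ε| * (‖B'‖ * M2 ^ (m+1)) :=
            mul_le_mul (mul_le_mul_of_nonneg_left h1 (by positivity)) h2
              (norm_nonneg _) (by positivity)
        _ = |ε| * ‖B'‖ * (M2 ^ (m+1) / (Nat.factorial (m+1) : ℝ)) := by field_simp
  have hgs : Summable (fun n : ℕ => |ε| * ‖B'‖ * (M2 ^ n / (Nat.factorial n : ℝ))) := hg.mul_left _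
  have hfnorm : Summable (fun n => ‖f n‖) :=
    Summable.of_nonneg_of_le (fun n => norm_nonneg _) hbound hgs
  have hfs : Summable f := hfnorm.of_norm
  set Q : H →L[ℂ] H := ∑' n, f n with hQdef
  have hQsum : HasSum f Q := hfs.hasSum
  have hQnorm : ‖Q‖ ≤ |ε| * ‖B'‖ * K := by
    calc ‖Q‖ ≤ ∑' n, ‖f n‖ := norm_tsum_le_tsum_norm hfnorm
      _ ≤ ∑' n, |ε| * ‖B'‖ * (M2 ^ n / (Nat.factorial n : ℝ)) := Summable.tsum_le_tsum hbound hfnorm hgs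
      _ = |ε| * ‖B'‖ * K := by rw [hKdef, tsum_mul_left]
  -- the exponential as a sum
  have hexp : HasSum (fun n => c n • (B ^ n)) E := by
    have h := NormedSpace.exp_series_hasSum_exp' (𝕂 := ℂ) ((ε : ℂ) • B)
    refine h.congr_fun fun n => ?_
    rw [smul_pow, smul_smul, hcdef]
  -- self-adjointness of E
  have hEsa : IsSelfAdjoint E := by
    have hsB : star ((ε : ℂ) • B) = (ε : ℂ) • B := by
      rw [star_smul, hBsa.star_eq, Complex.star_def, Complex.conj_ofReal]
    rw [hEdef, IsSelfAdjoint, NormedSpace.star_exp, hsB]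
  have hEadj : ∀ u v : H, ⟪E u, v⟫ = ⟪u, E v⟫ := by
    intro u v
    have hadj : ContinuousLinearMap.adjoint E = E := by
      rw [← ContinuousLinearMap.star_eq_adjoint]; exact hEsa.star_eq
    calc ⟪E u, v⟫ = ⟪ContinuousLinearMap.adjoint E u, v⟫ := by rw [hadj]
      _ = ⟪u, E v⟫ := ContinuousLinearMap.adjoint_inner_left E v u
  refine ⟨Q, ?_, ?_⟩
  · intro φ ψ
    -- pointwise sums
    have h1 : HasSum (fun n => c n • ((B ^ n) (ψ : H))) (E ↑ψ) := by
      have := hexp.mapL (ContinuousLinearMap.apply ℂ H (ψ : H))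
      simpa using this
    have h1' : HasSum (fun n => c n * ⟪(A φ : H), (B ^ n) (ψ : H)⟫) ⟪A φ, E ↑ψ⟫ := by
      have := h1.mapL (innerSL ℂ (A φ))
      simpa [inner_smul_right] using this
    have h2 : HasSum (fun n => c n * ⟪(φ : H), (B ^ n) (A ψ)⟫) ⟪(φ : H), E (A ψ)⟫ := by
      have := (hexp.mapL (ContinuousLinearMap.apply ℂ H (A ψ))).mapL (innerSL ℂ (φ : H))
      simpa [inner_smul_right] using this
    have h3 : HasSum (fun n => c n * ⟪(φ : H), Cseq B B' n (ψ : H)⟫) ⟪(φ : H), Q ↑ψ⟫ := by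
      have := (hQsum.mapL (ContinuousLinearMap.apply ℂ H (ψ : H))).mapL (innerSL ℂ (φ : H))
      simpa [hfdef, inner_smul_right] using this
    have hterm : ∀ n : ℕ, c n * ⟪(A φ : H), (B ^ n) (ψ : H)⟫
        = c n * ⟪(φ : H), (B ^ n) (A ψ)⟫ + c n * ⟪(φ : H), Cseq B B' n (ψ : H)⟫ := by
      intro n
      obtain ⟨hn, hAn⟩ := pow_pres A hA B B' hB n ψ
      have hs := hsymm φ ⟨(B ^ n) ↑ψ, hn⟩
      rw [hAn] at hs
      rw [← mul_add, ← inner_add_right]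
      congr 1
    have h4 : HasSum (fun n => c n * ⟪(A φ : H), (B ^ n) (ψ : H)⟫)
        (⟪(φ : H), E (A ψ)⟫ + ⟪(φ : H), Q ↑ψ⟫) := by
      refine (h2.add h3).congr_fun fun n => ?_
      rw [hterm n]
    have hfinal : ⟪(A φ : H), E ↑ψ⟫ = ⟪(φ : H), E (A ψ)⟫ + ⟪(φ : H), Q ↑ψ⟫ :=
      h1'.unique h4
    rw [hEadj (φ : H) (A ψ)]
    rw [hEdef] at hfinal
    linear_combination hfinal
  · intro φ ψ
    -- bound ‖exp(-(ε•B))‖ ≤ K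
    have hnegbound : ‖NormedSpace.exp (-((ε : ℂ) • B))‖ ≤ K := by
      have hsum := NormedSpace.norm_expSeries_summable' (𝕂 := ℂ) (-((ε : ℂ) • B))
      have hterm : ∀ n : ℕ, ‖((Nat.factorial n : ℂ))⁻¹ • (-((ε : ℂ) • B)) ^ n‖ ≤ M2 ^ n / (Nat.factorial n : ℝ) := by
        intro n
        have hfac : (0:ℝ) < (Nat.factorial n : ℝ) := by exact_mod_cast n.factorial_pos
        rw [norm_smul]
        have h1 : ‖((Nat.factorial n : ℂ))⁻¹‖ = ((Nat.factorial n : ℝ))⁻¹ := by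
          simp [abs_of_nonneg hfac.le]
        have h2 : ‖(-((ε : ℂ) • B)) ^ n‖ ≤ M2 ^ n := by
          rw [← neg_smul, smul_pow, norm_smul, norm_pow]
          have e1 : ‖-(ε : ℂ)‖ ≤ 1 := by
            rw [norm_neg, Complex.norm_real, Real.norm_eq_abs]; exact hε1
          have p1 : ‖-(ε : ℂ)‖ ^ n ≤ 1 :=
            (pow_le_pow_left₀ (norm_nonneg _) e1 n).trans_eq (one_pow n)
          have p2 : ‖(B : H →L[ℂ] H) ^ n‖ ≤ M2 ^ n :=
            (pow_norm_le B n).trans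
              (pow_le_pow_left₀ (by positivity) (by rw [hM2def]; linarith [norm_nonneg B]) n)
          calc ‖-(ε : ℂ)‖ ^ n * ‖(B : H →L[ℂ] H) ^ n‖ ≤ 1 * M2 ^ n :=
                mul_le_mul p1 p2 (norm_nonneg _) zero_le_one
            _ = M2 ^ n := one_mul _
        calc ‖((Nat.factorial n : ℂ))⁻¹‖ * ‖(-((ε : ℂ) • B)) ^ n‖ ≤ ((Nat.factorial n : ℝ))⁻¹ * M2 ^ n := by
              rw [h1]; gcongr
          _ = M2 ^ n / (Nat.factorial n : ℝ) := by ring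
      calc ‖NormedSpace.exp (-((ε : ℂ) • B))‖
          ≤ ∑' n : ℕ, ‖((Nat.factorial n : ℂ))⁻¹ • (-((ε : ℂ) • B)) ^ n‖ := by
            rw [NormedSpace.exp_eq_tsum ℂ]
            exact norm_tsum_le_tsum_norm hsum
        _ ≤ ∑' n : ℕ, M2 ^ n / (Nat.factorial n : ℝ) := Summable.tsum_le_tsum hterm hsum hg
        _ = K := hKdef.symm
    -- φ = exp(-(ε•B)) (E φ)
    have hinv : NormedSpace.exp (-((ε : ℂ) • B)) (E φ) = φ := by
      have hcomm : Commute (-((ε : ℂ) • B)) ((ε : ℂ) • B) := (Commute.refl _).neg_left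
      let +nondep : NormedAlgebra ℚ (H →L[ℂ] H) := .restrictScalars ℚ ℂ (H →L[ℂ] H)
      have := NormedSpace.exp_add_of_commute hcomm
      rw [neg_add_cancel, NormedSpace.exp_zero] at this
      have happ := congrArg (fun T : H →L[ℂ] H => T φ) this
      simpa [ContinuousLinearMap.mul_apply, hEdef] using happ.symm
    have hφ : ‖φ‖ ≤ K * ‖E φ‖ := by
      calc ‖φ‖ = ‖NormedSpace.exp (-((ε : ℂ) • B)) (E φ)‖ := by rw [hinv]
        _ ≤ ‖NormedSpace.exp (-((ε : ℂ) • B))‖ * ‖E φ‖ := le_opNorm _ _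
        _ ≤ K * ‖E φ‖ := by gcongr
    calc ‖⟪φ, Q ψ⟫‖ ≤ ‖φ‖ * ‖Q ψ‖ := norm_inner_le_norm _ _
      _ ≤ (K * ‖E φ‖) * (‖Q‖ * ‖ψ‖) := by
          gcongr
          exact le_opNorm _ _
      _ ≤ (K * ‖E φ‖) * ((|ε| * ‖B'‖ * K) * ‖ψ‖) := by gcongr
      _ = (K * K) * |ε| * ‖B'‖ * ‖E φ‖ * ‖ψ‖ := by ring
      _ ≤ (K * K + 1) * |ε| * ‖B'‖ * ‖E φ‖ * ‖ψ‖ := by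
          gcongr
          linarith
end
end

section
/- Let U be unitary, B a bounded self-adjoint operator with B ≥ 0, and for ε ∈ [0,1], z ∈ ℂ with 1/2 < |z| < 1, define T_ε⁺(z) = 1 − z·U*·e^{−εB}. Then T_ε⁺(z) is invertible in B(H) and its inverse G_ε⁺(z) satisfies ‖G_ε⁺(z)‖ ≤ C·(1 − |z|²)^{−1} for a constant C > 0 independent of ε and z. -/
open scoped ComplexInnerProductSpace
open ContinuousLinearMap

noncomputable section

variable {H : Type*} [NormedAddCommGroup H] [InnerProductSpace ℂ H] [CompleteSpace H]

/-- Norm bound for the operator exponential. -/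
lemma aux_norm_exp_le (x : H →L[ℂ] H) :
    ‖NormedSpace.exp x‖ ≤ Real.exp ‖x‖ := by
  rw [NormedSpace.exp_eq_tsum ℂ]
  have hsum : HasSum (fun n : ℕ => ‖x‖ ^ n / ((Nat.factorial n : ℕ) : ℝ)) (Real.exp ‖x‖) := by
    have h1 : Real.exp ‖x‖ = NormedSpace.exp ‖x‖ := by
      rw [Real.exp_eq_exp_ℝ]
    rw [h1, NormedSpace.exp_eq_tsum_div]
    exact (Real.summable_pow_div_factorial ‖x‖).hasSum
  refine tsum_of_norm_bounded hsum fun n => ?_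
  rw [norm_smul]
  rcases Nat.eq_zero_or_pos n with hn | hn
  · subst hn
    simpa [ContinuousLinearMap.one_def] using (ContinuousLinearMap.norm_id_le (𝕜 := ℂ) (E := H))
  · calc ‖((Nat.factorial n : ℕ) : ℂ)⁻¹‖ * ‖x ^ n‖
        ≤ (((Nat.factorial n : ℕ) : ℝ))⁻¹ * ‖x‖ ^ n := by
          refine mul_le_mul ?_ (norm_pow_le' x hn) (norm_nonneg _) (by positivity)
          simp
      _ = ‖x‖ ^ n / ((Nat.factorial n : ℕ) : ℝ) := by rw [div_eq_inv_mul]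

/-- `‖e^{-b}‖ ≤ 1` for positive `b`. -/
lemma aux_norm_exp_neg_le_one (b : H →L[ℂ] H) (hb : b.IsPositive) :
    ‖NormedSpace.exp (-b)‖ ≤ 1 := by
  have hb0 : (0 : H →L[ℂ] H) ≤ b := (ContinuousLinearMap.nonneg_iff_isPositive b).mpr hb
  have hsa : IsSelfAdjoint b := hb.isSelfAdjoint
  set t : ℝ := ‖b‖ with ht
  set S : H →L[ℂ] H := algebraMap ℝ (H →L[ℂ] H) t - b with hS
  have hS0 : (0 : H →L[ℂ] H) ≤ S := sub_nonneg.mpr hsa.le_algebraMap_norm_self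
  have hSle : S ≤ algebraMap ℝ (H →L[ℂ] H) t := sub_le_self _ hb0
  have hSnorm : ‖S‖ ≤ t :=
    (CStarAlgebra.norm_le_iff_le_algebraMap S (norm_nonneg b) hS0).mpr hSle
  have hsplit : (-b : H →L[ℂ] H) = S + algebraMap ℝ (H →L[ℂ] H) (-t) := by
    rw [hS, map_neg]; abel
  have hcomm : Commute S (algebraMap ℝ (H →L[ℂ] H) (-t)) := (Algebra.commutes (-t) S).symm
  have hexp : NormedSpace.exp (-b) =
      NormedSpace.exp S * NormedSpace.exp (algebraMap ℝ (H →L[ℂ] H) (-t)) := by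
    let +nondep : NormedAlgebra ℚ (H →L[ℂ] H) := .restrictScalars ℚ ℂ (H →L[ℂ] H)
    rw [hsplit, NormedSpace.exp_add_of_commute hcomm]
  have hexpalg : NormedSpace.exp (algebraMap ℝ (H →L[ℂ] H) (-t)) = algebraMap ℝ (H →L[ℂ] H) (Real.exp (-t)) := by
    rw [← NormedSpace.algebraMap_exp_comm, Real.exp_eq_exp_ℝ]
  have halgnorm : ‖algebraMap ℝ (H →L[ℂ] H) (Real.exp (-t))‖ ≤ Real.exp (-t) := by
    rw [Algebra.algebraMap_eq_smul_one, norm_smul, Real.norm_eq_abs,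
      abs_of_pos (Real.exp_pos _)]
    calc Real.exp (-t) * ‖(1 : H →L[ℂ] H)‖ ≤ Real.exp (-t) * 1 :=
          mul_le_mul_of_nonneg_left
            (by rw [ContinuousLinearMap.one_def]; exact ContinuousLinearMap.norm_id_le)
            (Real.exp_pos _).le
      _ = Real.exp (-t) := mul_one _
  calc ‖NormedSpace.exp (-b)‖
      ≤ ‖NormedSpace.exp S‖ * ‖NormedSpace.exp (algebraMap ℝ (H →L[ℂ] H) (-t))‖ := by
        rw [hexp]; exact norm_mul_le _ _
    _ ≤ Real.exp ‖S‖ * Real.exp (-t) := by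
        rw [hexpalg]
        exact mul_le_mul (aux_norm_exp_le S) halgnorm (norm_nonneg _)
          (Real.exp_pos _).le
    _ ≤ Real.exp t * Real.exp (-t) := by
        gcongr
    _ = 1 := by rw [← Real.exp_add, add_neg_cancel, Real.exp_zero]

set_option maxHeartbeats 1000000 in
/-- Let `U` be unitary and `B ≥ 0` bounded self-adjoint. For `ε ∈ [0,1]` and
`1/2 < |z| < 1`, the operator `T_ε⁺(z) = 1 - z U* e^{-εB}` is boundedly invertible with
`‖T_ε⁺(z)⁻¹‖ ≤ C (1 - |z|²)⁻¹` for a constant `C` independent of `ε` and `z`. -/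
theorem resolvent_bound_Teps
    (U : H →L[ℂ] H) (hU : IsUnitaryCLM U)
    (B : H →L[ℂ] H) (hB : B.IsPositive) :
    ∃ C > (0 : ℝ), ∀ ε ∈ Set.Icc (0 : ℝ) 1, ∀ z : ℂ, 1 / 2 < ‖z‖ → ‖z‖ < 1 →
      ∃ G : H →L[ℂ] H,
        (1 - z • (adjoint U ∘L NormedSpace.exp (((-ε : ℝ) : ℂ) • B))) ∘L G = 1 ∧
        G ∘L (1 - z • (adjoint U ∘L NormedSpace.exp (((-ε : ℝ) : ℂ) • B))) = 1 ∧
        ‖G‖ ≤ C * (1 - ‖z‖ ^ 2)⁻¹ := by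
  -- the adjoint of a unitary has norm at most 1
  have hUadj : ∀ x : H, ‖adjoint U x‖ ≤ ‖x‖ := by
    intro x
    have h1 : ⟪adjoint U x, adjoint U x⟫ = ⟪x, x⟫ := by
      rw [adjoint_inner_left]
      congr 1
      calc U (adjoint U x) = (U ∘L adjoint U) x := rfl
        _ = x := by rw [hU.2]; rfl
    have h2 : ‖adjoint U x‖ ^ 2 = ‖x‖ ^ 2 := by
      rw [@inner_self_eq_norm_sq_to_K ℂ, @inner_self_eq_norm_sq_to_K ℂ] at h1
      exact_mod_cast h1
    nlinarith [norm_nonneg (adjoint U x), norm_nonneg x]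
  have hUnorm : ‖adjoint U‖ ≤ 1 :=
    opNorm_le_bound _ zero_le_one fun x => by rw [one_mul]; exact hUadj x
  refine ⟨2, by norm_num, ?_⟩
  intro ε hε z hz1 hz2
  set E := NormedSpace.exp (((-ε : ℝ) : ℂ) • B) with hEdef
  have hsm : (((-ε : ℝ) : ℂ) • B) = -(((ε : ℝ) : ℂ) • B) := by
    push_cast
    rw [neg_smul]
  have hεB : (((ε : ℝ) : ℂ) • B).IsPositive := by
    have hsa' : IsSelfAdjoint (((ε : ℝ) : ℂ) • B) := by
      have hBsa := hB.isSelfAdjoint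
      rw [isSelfAdjoint_iff] at *
      rw [star_smul, hBsa]
      congr 1
      simp
    refine isPositive_def'.mpr ⟨hsa', fun x => ?_⟩
    rw [reApplyInnerSelf_apply, ContinuousLinearMap.smul_apply, inner_smul_left,
      Complex.conj_ofReal]
    have h0 := hB.inner_nonneg_left x
    simp only [RCLike.re_to_complex] at h0 ⊢
    rw [Complex.mul_re, Complex.ofReal_re, Complex.ofReal_im]
    simp only [zero_mul, sub_zero]
    exact mul_nonneg hε.1 (Complex.nonneg_iff.mp h0).1
  have hE : ‖E‖ ≤ 1 := by
    rw [hEdef, hsm]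
    exact aux_norm_exp_neg_le_one _ hεB
  set a : H →L[ℂ] H := z • (adjoint U ∘L E) with hadef
  have haz : ‖a‖ ≤ ‖z‖ := by
    rw [hadef, norm_smul]
    calc ‖z‖ * ‖adjoint U ∘L E‖ ≤ ‖z‖ * (‖adjoint U‖ * ‖E‖) := by
          gcongr; exact opNorm_comp_le _ _
      _ ≤ ‖z‖ * (1 * 1) := by gcongr <;> assumption
      _ = ‖z‖ := by ring
  have ha : ‖a‖ < 1 := lt_of_le_of_lt haz hz2
  refine ⟨∑' n : ℕ, a ^ n, ?_, ?_, ?_⟩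
  · rw [← ContinuousLinearMap.mul_def]
    exact mul_neg_geom_series a ha
  · rw [← ContinuousLinearMap.mul_def]
    exact geom_series_mul_neg a ha
  · have hz0 : (0 : ℝ) ≤ ‖z‖ := norm_nonneg z
    have h1 : ‖∑' n : ℕ, a ^ n‖ ≤ ‖(1 : H →L[ℂ] H)‖ - 1 + (1 - ‖a‖)⁻¹ :=
      tsum_geometric_le_of_norm_lt_one a ha
    have hone : ‖(1 : H →L[ℂ] H)‖ ≤ 1 := by
      rw [ContinuousLinearMap.one_def]; exact ContinuousLinearMap.norm_id_le
    have h2 : ‖∑' n : ℕ, a ^ n‖ ≤ (1 - ‖a‖)⁻¹ := by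
      have := h1
      linarith
    have h3 : (1 - ‖a‖)⁻¹ ≤ (1 - ‖z‖)⁻¹ := by
      apply inv_anti₀
      · linarith
      · linarith
    have h4 : (1 - ‖z‖)⁻¹ ≤ 2 * (1 - ‖z‖ ^ 2)⁻¹ := by
      have hzz : (0 : ℝ) < 1 - ‖z‖ := by linarith
      have hzz2 : (0 : ℝ) < 1 - ‖z‖ ^ 2 := by nlinarith
      rw [inv_eq_one_div, inv_eq_one_div, mul_div_assoc' 2 1 _, div_le_div_iff₀ hzz hzz2]
      nlinarith [sq_nonneg (1 - ‖z‖)]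
    linarith
end
end

section
/- Let (Ω, F, P) be the two-sided Bernoulli shift space Ω = {−1,1}^ℤ with product measure, U the Koopman operator Uf = f∘S of the shift S on L²(Ω,P), and A the self-adjoint operator which on each Fourier–Walsh basis vector f_σ (σ ⊂ ℤ finite nonempty) acts by A f_σ = (|σ|^{−1}·Σ_{i∈σ} i)·f_σ and annihilates the vacuum. Then U ∈ C¹(A) and U*AU − A = Q^⊥, the orthogonal projection onto the orthogonal complement of the constant functions. -/
open scoped ComplexInnerProductSpace
open ContinuousLinearMap

noncomputable section

variable {H : Type*} [NormedAddCommGroup H] [InnerProductSpace ℂ H] [CompleteSpace H]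

/-- The average `|σ|⁻¹ ∑_{i ∈ σ} i` of a finite set of integers (zero for `σ = ∅`). -/
def wAvg (σ : Finset ℤ) : ℝ := (σ.sum fun i => (i : ℝ)) / σ.card

def shiftEquiv' : Finset ℤ ≃ Finset ℤ := (Equiv.addRight (1:ℤ)).finsetCongr

lemma shiftEquiv'_apply (σ : Finset ℤ) : shiftEquiv' σ = σ.image (· + 1) := by
  rw [shiftEquiv', Equiv.finsetCongr_apply, Finset.map_eq_image]
  rfl

lemma wAvg_shift (σ : Finset ℤ) (h : σ.Nonempty) :
    wAvg (σ.image (· + 1)) = wAvg σ + 1 := by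
  have hinj : ∀ a ∈ σ, ∀ b ∈ σ, a + 1 = b + 1 → a = b := by intro a _ b _ hab; omega
  have hc : (σ.card : ℝ) ≠ 0 := by
    exact_mod_cast Finset.card_ne_zero_of_mem h.choose_spec
  rw [wAvg, wAvg, Finset.sum_image hinj, Finset.card_image_of_injOn
    (fun a _ b _ hab => by omega)]
  push_cast
  rw [Finset.sum_add_distrib, Finset.sum_const, nsmul_eq_mul, mul_one]
  field_simp

/-- In the Bernoulli shift model, realized through the Fourier–Walsh
orthonormal basis `(f_σ)` of `L²(Ω, P)` indexed by finite subsets `σ ⊂ ℤ`, the Koopman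
operator `U` (given by `U f_σ = f_{σ+1}`) is of class `C¹(A)` for the self-adjoint operator
`A` acting diagonally by `A f_σ = (|σ|⁻¹ ∑_{i∈σ} i) f_σ` (annihilating the vacuum `f_∅`),
and `U*AU - A = Q^⊥`, the projection onto the orthogonal complement of the constants. -/
theorem bernoulli_koopman_commutator
    (f : HilbertBasis (Finset ℤ) ℂ H)
    (U : H →L[ℂ] H) (hU : IsUnitaryCLM U)
    (hUf : ∀ σ : Finset ℤ, U (f σ) = f (σ.image (· + 1)))
    (A : H →ₗ.[ℂ] H)
    (hAdom : ∀ x : H,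
      x ∈ A.domain ↔ Summable (fun σ : Finset ℤ => (wAvg σ * ‖⟪f σ, x⟫‖) ^ 2))
    (hAval : ∀ (ψ : A.domain) (σ : Finset ℤ),
      ⟪f σ, A ψ⟫ = (wAvg σ : ℂ) * ⟪f σ, (ψ : H)⟫) :
    ∃ U' : H →L[ℂ] H, HasCommutator A U U' ∧
      adjoint U ∘L U' =
        1 - (ℂ ∙ f ∅).subtypeL ∘L (Submodule.orthogonalProjectionOnto (ℂ ∙ f ∅) : H →L[ℂ] ℂ ∙ f ∅) := by
  classical
  set P : H →L[ℂ] H :=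
    (ℂ ∙ f ∅).subtypeL ∘L (Submodule.orthogonalProjectionOnto (ℂ ∙ f ∅) : H →L[ℂ] ℂ ∙ f ∅) with hP
  -- action of the adjoint on basis vectors
  have hUadj : ∀ τ : Finset ℤ, adjoint U (f (τ.image (· + 1))) = f τ := by
    intro τ
    rw [← hUf τ, ← ContinuousLinearMap.comp_apply, hU.1, ContinuousLinearMap.one_apply]
  have hfU : ∀ (τ : Finset ℤ) (x : H), ⟪f (τ.image (· + 1)), U x⟫ = ⟪f τ, x⟫ := by
    intro τ x
    rw [← hUadj τ, ContinuousLinearMap.adjoint_inner_left]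
  -- value of P on any vector
  have hPψ : ∀ x : H, P x = ⟪f ∅, x⟫ • f ∅ := by
    intro x
    have : P x = ((Submodule.orthogonalProjectionOnto (ℂ ∙ f ∅) x : H)) := rfl
    rw [this, ← Submodule.starProjection_apply, Submodule.starProjection_singleton, f.orthonormal.1 ∅]
    norm_num
  have hfP : ∀ (τ : Finset ℤ) (x : H),
      ⟪f τ, P x⟫ = if τ = ∅ then ⟪f ∅, x⟫ else 0 := by
    intro τ x
    rw [hPψ, inner_smul_right, orthonormal_iff_ite.mp f.orthonormal τ ∅]
    split <;> simp
  refine ⟨U ∘L (1 - P), ?_, ?_⟩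
  · intro φ ψ
    have h1 : Summable fun σ : Finset ℤ => ⟪(A φ : H), f σ⟫ * ⟪f σ, U ψ⟫ :=
      f.summable_inner_mul_inner _ _
    have h2 : Summable fun σ : Finset ℤ => ⟪(φ : H), f σ⟫ * ⟪f σ, U (A ψ)⟫ :=
      f.summable_inner_mul_inner _ _
    rw [← f.tsum_inner_mul_inner (A φ) (U ψ), ← f.tsum_inner_mul_inner (φ : H) (U (A ψ)),
      ← f.tsum_inner_mul_inner (φ : H) ((U ∘L (1 - P)) (ψ : H)), ← h1.tsum_sub h2]
    rw [← shiftEquiv'.tsum_eq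
        (fun σ => ⟪(A φ : H), f σ⟫ * ⟪f σ, U ψ⟫ - ⟪(φ : H), f σ⟫ * ⟪f σ, U (A ψ)⟫),
      ← shiftEquiv'.tsum_eq (fun σ => ⟪(φ : H), f σ⟫ * ⟪f σ, ((U ∘L (1 - P)) (ψ : H))⟫)]
    refine tsum_congr fun τ => ?_
    have hT : shiftEquiv' τ = τ.image (· + 1) := shiftEquiv'_apply τ
    have hA1 : ⟪(A φ : H), f (shiftEquiv' τ)⟫
        = (wAvg (shiftEquiv' τ) : ℂ) * ⟪(φ : H), f (shiftEquiv' τ)⟫ := by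
      rw [← inner_conj_symm, hAval φ (shiftEquiv' τ), map_mul, Complex.conj_ofReal,
        inner_conj_symm]
    rw [hA1, hT, hfU τ, hfU τ, hAval ψ τ]
    have h1P : (1 - P) ψ = ψ - P ψ := rfl
    rw [ContinuousLinearMap.comp_apply, h1P, hfU τ, inner_sub_right, hfP]
    rcases eq_or_ne τ ∅ with rfl | hne
    · simp only [Finset.image_empty, wAvg, Finset.sum_empty, Finset.card_empty, if_pos rfl]
      push_cast
      ring
    · rw [← hT, hT, wAvg_shift τ (Finset.nonempty_iff_ne_empty.mpr hne), if_neg hne]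
      push_cast
      ring
  · rw [← ContinuousLinearMap.comp_assoc, hU.1, ContinuousLinearMap.one_def,
      ContinuousLinearMap.id_comp]
end
end

section
/- Let A be a self-adjoint operator and U, V unitary operators in C¹(A) such that U − V and ad_A(U − V) are compact. If there exist c > 0, a compact operator K, and a smooth compactly supported function φ on an open arc Θ ⊂ 𝕋 with Φ(U)(U*AU − A)Φ(U) ≥ c·Φ(U)² + K, then there exist c' > 0 and a compact operator K' with Φ(V)(V*AV − A)Φ(V) ≥ c'·Φ(V)² + K'. In other words, the Mourre (propagation) estimate on Θ is stable under compact C¹-perturbations. -/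
open scoped ComplexInnerProductSpace
open ContinuousLinearMap

noncomputable section

variable {H : Type*} [NormedAddCommGroup H] [InnerProductSpace ℂ H] [CompleteSpace H]

private lemma cptMulL (g : H →L[ℂ] H) {f : H →L[ℂ] H} (hf : IsCompactOperator ⇑f) :
    IsCompactOperator ⇑(g * f) := by
  simpa only [ContinuousLinearMap.mul_def, ContinuousLinearMap.coe_comp'] using
    hf.continuous_comp g.continuous

private lemma cptMulR {f : H →L[ℂ] H} (hf : IsCompactOperator ⇑f) (g : H →L[ℂ] H) :
    IsCompactOperator ⇑(f * g) := by
  simpa only [ContinuousLinearMap.mul_def, ContinuousLinearMap.coe_comp'] using hf.comp_clm g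

private lemma cptAdd {f g : H →L[ℂ] H} (hf : IsCompactOperator ⇑f)
    (hg : IsCompactOperator ⇑g) : IsCompactOperator ⇑(f + g) := by
  simpa only [ContinuousLinearMap.coe_add'] using hf.add hg

private lemma cptSub {f g : H →L[ℂ] H} (hf : IsCompactOperator ⇑f)
    (hg : IsCompactOperator ⇑g) : IsCompactOperator ⇑(f - g) := by
  simpa only [ContinuousLinearMap.coe_sub'] using hf.sub hg

private lemma cptNeg {f : H →L[ℂ] H} (hf : IsCompactOperator ⇑f) :
    IsCompactOperator ⇑(-f) := by
  simpa only [ContinuousLinearMap.coe_neg'] using hf.neg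

private lemma cptSMul (c : ℂ) {f : H →L[ℂ] H} (hf : IsCompactOperator ⇑f) :
    IsCompactOperator ⇑(c • f) := by
  simpa only [ContinuousLinearMap.coe_smul'] using hf.smul c

private lemma adjoint_sub_cpt {U V : H →L[ℂ] H} (hUu : IsUnitaryCLM U) (hVu : IsUnitaryCLM V)
    (h : IsCompactOperator ⇑(U - V)) :
    IsCompactOperator ⇑(adjoint U - adjoint V) := by
  have h1 : adjoint U * U = 1 := hUu.1
  have h2 : V * adjoint V = 1 := hVu.2
  have key : adjoint U - adjoint V = adjoint U * ((V - U) * adjoint V) := by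
    rw [sub_mul, mul_sub, h2, mul_one, ← mul_assoc, h1, one_mul]
  have hVU : IsCompactOperator ⇑(V - U) := by
    rw [← neg_sub]; exact cptNeg h
  rw [key]
  exact cptMulL _ (cptMulR hVU _)

private lemma starNormal_of_unitary {U : H →L[ℂ] H} (hU : IsUnitaryCLM U) : IsStarNormal U := by
  refine ⟨?_⟩
  rw [Commute, SemiconjBy, star_eq_adjoint, ContinuousLinearMap.mul_def,
    ContinuousLinearMap.mul_def, hU.1, hU.2]

private lemma cfc_sub_compact {U V : H →L[ℂ] H} (hUu : IsUnitaryCLM U) (hVu : IsUnitaryCLM V)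
    (hUV : IsCompactOperator ⇑(U - V)) (φ : ℂ → ℂ) (hφ : Continuous φ) :
    IsCompactOperator ⇑(cfc φ U - cfc φ V) := by
  have hUn : IsStarNormal U := starNormal_of_unitary hUu
  have hVn : IsStarNormal V := starNormal_of_unitary hVu
  have hadj : IsCompactOperator ⇑(adjoint U - adjoint V) := adjoint_sub_cpt hUu hVu hUV
  set S : Set ℂ := spectrum ℂ U ∪ spectrum ℂ V with hS
  have hUS : spectrum ℂ U ⊆ S := Set.subset_union_left
  have hVS : spectrum ℂ V ⊆ S := Set.subset_union_right
  haveI : CompactSpace S := isCompact_iff_compactSpace.mp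
    ((spectrum.isCompact U).union (spectrum.isCompact V))
  let ΦU : C(S, ℂ) →⋆ₐ[ℂ] (H →L[ℂ] H) := cfcHomSuperset hUn hUS
  let ΦV : C(S, ℂ) →⋆ₐ[ℂ] (H →L[ℂ] H) := cfcHomSuperset hVn hVS
  let T : StarSubalgebra ℂ C(S, ℂ) :=
  { carrier := {f | IsCompactOperator ⇑(ΦU f - ΦV f) ∧
      IsCompactOperator ⇑(star (ΦU f - ΦV f))}
    zero_mem' := by
      simp only [Set.mem_setOf_eq, map_zero, sub_self, star_zero]
      exact ⟨isCompactOperator_zero, isCompactOperator_zero⟩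
    one_mem' := by
      simp only [Set.mem_setOf_eq, map_one, sub_self, star_zero]
      exact ⟨isCompactOperator_zero, isCompactOperator_zero⟩
    add_mem' := by
      rintro f g ⟨hf1, hf2⟩ ⟨hg1, hg2⟩
      have key : ΦU (f + g) - ΦV (f + g) = (ΦU f - ΦV f) + (ΦU g - ΦV g) := by
        rw [map_add, map_add]; abel
      constructor
      · rw [key]; exact cptAdd hf1 hg1
      · rw [key, star_add]; exact cptAdd hf2 hg2
    mul_mem' := by
      rintro f g ⟨hf1, hf2⟩ ⟨hg1, hg2⟩
      have key : ΦU (f * g) - ΦV (f * g)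
          = ΦU f * (ΦU g - ΦV g) + (ΦU f - ΦV f) * ΦV g := by
        rw [map_mul, map_mul, mul_sub, sub_mul]; abel
      constructor
      · rw [key]; exact cptAdd (cptMulL _ hg1) (cptMulR hf1 _)
      · rw [key, star_add, star_mul, star_mul]
        exact cptAdd (cptMulR hg2 _) (cptMulL _ hf2)
    algebraMap_mem' := by
      intro r
      simp only [Set.mem_setOf_eq, AlgHomClass.commutes, sub_self, star_zero]
      exact ⟨isCompactOperator_zero, isCompactOperator_zero⟩
    star_mem' := by
      rintro f ⟨hf1, hf2⟩
      have key : ΦU (star f) - ΦV (star f) = star (ΦU f - ΦV f) := by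
        rw [map_star, map_star, star_sub]
      constructor
      · rw [key]; exact hf2
      · rw [key, star_star]; exact hf1 }
  have hTclosed : IsClosed (T : Set C(S, ℂ)) := by
    have hcont : Continuous fun f : C(S, ℂ) => ΦU f - ΦV f :=
      (cfcHomSuperset_continuous hUn hUS).sub (cfcHomSuperset_continuous hVn hVS)
    have h1 : IsClosed {f : C(S, ℂ) | IsCompactOperator ⇑(ΦU f - ΦV f)} :=
      isClosed_setOf_isCompactOperator.preimage hcont
    have h2 : IsClosed {f : C(S, ℂ) | IsCompactOperator ⇑(star (ΦU f - ΦV f))} :=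
      isClosed_setOf_isCompactOperator.preimage (continuous_star.comp hcont)
    exact (h1.inter h2 : IsClosed ({f : C(S, ℂ) | IsCompactOperator ⇑(ΦU f - ΦV f)} ∩
        {f : C(S, ℂ) | IsCompactOperator ⇑(star (ΦU f - ΦV f))}))
  have hXmem : (Polynomial.toContinuousMapOnAlgHom S Polynomial.X : C(S, ℂ)) ∈ T := by
    have hrx : (Polynomial.toContinuousMapOnAlgHom S Polynomial.X : C(S, ℂ))
        = ContinuousMap.restrict S (ContinuousMap.id ℂ) :=
      Polynomial.toContinuousMapOn_X_eq_restrict_id S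
    have hU_id : ΦU (Polynomial.toContinuousMapOnAlgHom S Polynomial.X) = U := by
      rw [hrx]; exact cfcHomSuperset_id hUn hUS
    have hV_id : ΦV (Polynomial.toContinuousMapOnAlgHom S Polynomial.X) = V := by
      rw [hrx]; exact cfcHomSuperset_id hVn hVS
    constructor
    · rw [hU_id, hV_id]; exact hUV
    · rw [hU_id, hV_id, star_sub, star_eq_adjoint, star_eq_adjoint]; exact hadj
  have hle : (polynomialFunctions S).starClosure ≤ T := by
    rw [polynomialFunctions.starClosure_eq_adjoin_X]
    exact StarAlgebra.adjoin_le (Set.singleton_subset_iff.mpr hXmem)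
  have htop : (⊤ : StarSubalgebra ℂ C(S, ℂ)) ≤ T := by
    rw [← polynomialFunctions.starClosure_topologicalClosure S]
    exact StarSubalgebra.topologicalClosure_minimal hle hTclosed
  have hmem : ContinuousMap.restrict S (⟨φ, hφ⟩ : C(ℂ, ℂ)) ∈ T := htop trivial
  obtain ⟨h1, -⟩ := hmem
  have hUeq : ΦU (ContinuousMap.restrict S (⟨φ, hφ⟩ : C(ℂ, ℂ))) = cfc φ U := by
    rw [cfc_apply φ U hUn (hφ.continuousOn)]
    exact congrArg (cfcHom hUn) (ContinuousMap.ext fun x => rfl)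
  have hVeq : ΦV (ContinuousMap.restrict S (⟨φ, hφ⟩ : C(ℂ, ℂ))) = cfc φ V := by
    rw [cfc_apply φ V hVn (hφ.continuousOn)]
    exact congrArg (cfcHom hVn) (ContinuousMap.ext fun x => rfl)
  rw [hUeq, hVeq] at h1
  exact h1

/-- Stability of the Mourre (propagation) estimate under compact
`C¹`-perturbations: if `U, V ∈ C¹(A)` are unitary with `U - V` and `ad_A(U - V)` compact, and
`Φ(U)(U*AU - A)Φ(U) ≥ c Φ(U)² + K` with `c > 0` and `K` compact (where `Φ(U)` is the
continuous functional calculus of the non-negative function `φ` applied to `U`), then there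
are `c' > 0` and a compact `K'` with `Φ(V)(V*AV - A)Φ(V) ≥ c' Φ(V)² + K'`. -/
theorem mourre_estimate_stable_under_compact_perturbation
    (A : H →ₗ.[ℂ] H) (hA : IsSelfAdjoint A)
    (U U' V V' : H →L[ℂ] H)
    (hUu : IsUnitaryCLM U) (hVu : IsUnitaryCLM V)
    (hUC : HasCommutator A U U') (hVC : HasCommutator A V V')
    (hUVcpt : IsCompactOperator (⇑(U - V)))
    (hadcpt : IsCompactOperator (⇑(U' - V')))
    (φ : ℂ → ℂ) (hφcont : Continuous φ)
    (hφpos : ∀ z, 0 ≤ (φ z).re ∧ (φ z).im = 0)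
    (c : ℝ) (hc : 0 < c) (K : H →L[ℂ] H) (hK : IsCompactOperator (⇑K))
    (hmourre : (cfc φ U ∘L (adjoint U ∘L U') ∘L cfc φ U
        - (c : ℂ) • (cfc φ U ∘L cfc φ U) - K).IsPositive) :
    ∃ c' > (0 : ℝ), ∃ K' : H →L[ℂ] H, IsCompactOperator (⇑K') ∧
      (cfc φ V ∘L (adjoint V ∘L V') ∘L cfc φ V
        - (c' : ℂ) • (cfc φ V ∘L cfc φ V) - K').IsPositive := by
  have hcfc : IsCompactOperator ⇑(cfc φ U - cfc φ V) :=
    cfc_sub_compact hUu hVu hUVcpt φ hφcont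
  have hadj : IsCompactOperator ⇑(adjoint V - adjoint U) := by
    refine adjoint_sub_cpt hVu hUu ?_
    rw [← neg_sub]; exact cptNeg hUVcpt
  simp only [← ContinuousLinearMap.mul_def] at hmourre ⊢
  set P := cfc φ U with hP
  set Q := cfc φ V with hQ
  set BU := adjoint U * U' with hBU
  set BV := adjoint V * V' with hBV
  have hDqp : IsCompactOperator ⇑(Q - P) := by
    rw [← neg_sub]; exact cptNeg hcfc
  have hBdiff : IsCompactOperator ⇑(BV - BU) := by
    have key : BV - BU = (adjoint V - adjoint U) * V' + adjoint U * (V' - U') := by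
      rw [sub_mul, mul_sub, hBU, hBV]; abel
    have hVU' : IsCompactOperator ⇑(V' - U') := by
      rw [← neg_sub]; exact cptNeg hadcpt
    rw [key]
    exact cptAdd (cptMulR hadj _) (cptMulL _ hVU')
  refine ⟨c, hc, K + ((Q * BV * Q - (c : ℂ) • (Q * Q)) - (P * BU * P - (c : ℂ) • (P * P))),
    ?_, ?_⟩
  · have h1 : Q * BV * Q - P * BU * P
        = (Q - P) * BV * Q + P * (BV - BU) * Q + (P * BU) * (Q - P) := by
      noncomm_ring
    have h2 : Q * Q - P * P = (Q - P) * Q + P * (Q - P) := by noncomm_ring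
    have e : (Q * BV * Q - (c : ℂ) • (Q * Q)) - (P * BU * P - (c : ℂ) • (P * P))
        = (Q * BV * Q - P * BU * P) - (c : ℂ) • (Q * Q - P * P) := by
      rw [smul_sub]; abel
    rw [e, h1, h2]
    refine cptAdd hK (cptSub (cptAdd (cptAdd ?_ ?_) ?_) (cptSMul _ (cptAdd ?_ ?_)))
    · exact cptMulR (cptMulR hDqp _) _
    · exact cptMulR (cptMulL _ hBdiff) _
    · exact cptMulL _ hDqp
    · exact cptMulR hDqp _
    · exact cptMulL _ hDqp
  · rw [← mul_assoc] at hmourre ⊢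
    have e : Q * BV * Q - (c : ℂ) • (Q * Q)
        - (K + ((Q * BV * Q - (c : ℂ) • (Q * Q)) - (P * BU * P - (c : ℂ) • (P * P))))
        = P * BU * P - (c : ℂ) • (P * P) - K := by abel
    rw [e]
    exact hmourre

end
end

section
/- Let (γ_k)_{k∈ℤ} be a bounded complex sequence with sup_k |k·(γ_{k+1} − γ_k)| < ∞, D_γ the diagonal operator D_γ e_k = γ_k e_k on ℓ²(ℤ), T the bilateral shift, and A the position operator. Then D_γ belongs to C¹(TA + AT*), and the commutator is ad_{TA+AT*}(D_γ) = T·D_{x(γ−Sγ)} + D_{x(Sγ−γ)}·T*, where (Sγ)_k = γ_{k+1} and x denotes the sequence (k)_{k∈ℤ}. -/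
open scoped ComplexInnerProductSpace
open ContinuousLinearMap

noncomputable section

variable {H : Type*} [NormedAddCommGroup H] [InnerProductSpace ℂ H] [CompleteSpace H]

set_option linter.unusedSectionVars false in
private lemma hb_ext (e : HilbertBasis ℤ ℂ H) {f g : H →L[ℂ] ℂ}
    (h : ∀ k, f (e k) = g (e k)) : f = g := by
  refine ContinuousLinearMap.ext_on (s := Set.range (e : ℤ → H)) ?_ ?_
  · rw [Submodule.dense_iff_topologicalClosure_eq_top]
    exact e.dense_span
  · rintro x ⟨k, rfl⟩
    exact h k

private lemma inner_diag (e : HilbertBasis ℤ ℂ H) (M : H →L[ℂ] H) (μ : ℤ → ℂ)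
    (hM : ∀ k, M (e k) = μ k • e k) (k : ℤ) (ψ : H) :
    ⟪e k, M ψ⟫ = μ k * ⟪e k, ψ⟫ := by
  have key : (innerSL ℂ (e k)).comp M = μ k • innerSL ℂ (e k) := by
    apply hb_ext e
    intro j
    have hij := orthonormal_iff_ite.mp e.orthonormal k j
    simp only [ContinuousLinearMap.comp_apply, ContinuousLinearMap.smul_apply, innerSL_apply_apply,
      hM j, inner_smul_right, smul_eq_mul, hij]
    rcases eq_or_ne k j with rfl | hkj
    · simp
    · simp [hkj]
  have := DFunLike.congr_fun key ψ
  simpa using this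

private lemma Tadj_apply (e : HilbertBasis ℤ ℂ H) (T : H →L[ℂ] H) (hT : IsUnitaryCLM T)
    (hTe : ∀ k : ℤ, T (e k) = e (k + 1)) (k : ℤ) :
    adjoint T (e k) = e (k - 1) := by
  have h1 : adjoint T (T (e (k - 1))) = e (k - 1) := by
    rw [← ContinuousLinearMap.comp_apply, hT.1, ContinuousLinearMap.one_apply]
  rw [hTe (k - 1), show k - 1 + 1 = k from by ring] at h1
  exact h1

private lemma sum_telescope_Icc (t : ℤ → ℂ) (m : ℤ) : ∀ N : ℤ, m ≤ N →
    ∑ k ∈ Finset.Icc (m + 1) N, (t (k - 1) - t k) = t m - t N := by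
  refine Int.le_induction ?_ ?_
  · simp
  · intro N hN ih
    have hins : Finset.Icc (m + 1) (N + 1) = insert (N + 1) (Finset.Icc (m + 1) N) := by
      ext x
      simp only [Finset.mem_Icc, Finset.mem_insert]
      omega
    rw [hins, Finset.sum_insert (by simp), ih]
    rw [show N + 1 - 1 = N from by ring]
    ring

private lemma exists_int_mul_small (d : ℤ → ℝ) (hd : Summable d) (hnn : ∀ k, 0 ≤ d k)
    {ε : ℝ} (hε : 0 < ε) (N0 : ℤ) :
    ∃ N : ℤ, N0 ≤ N ∧ 1 ≤ N ∧ (N : ℝ) * d N < ε := by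
  by_contra hcon
  push_neg at hcon
  set m : ℤ := max N0 1 with hm
  have hm1 : (1 : ℤ) ≤ m := le_max_right _ _
  have hinj : Function.Injective (fun n : ℕ => m + (n : ℤ)) := by
    intro a b hab
    simp only at hab
    omega
  have hsum : Summable (fun n : ℕ => d (m + n)) := hd.comp_injective hinj
  have hpos : ∀ n : ℕ, (0 : ℝ) < (m : ℝ) + n := by
    intro n
    have : (1 : ℝ) ≤ (m : ℝ) := by exact_mod_cast hm1
    positivity
  have hle : ∀ n : ℕ, ε / ((m : ℝ) + n) ≤ d (m + n) := by
    intro n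
    have h1 : ε ≤ ((m + n : ℤ) : ℝ) * d (m + n) := by
      refine hcon (m + n) (by omega) (by omega)
    rw [div_le_iff₀ (hpos n)]
    calc ε ≤ ((m + n : ℤ) : ℝ) * d (m + n) := h1
      _ = d (m + n) * ((m : ℝ) + n) := by push_cast; ring
  have hsum2 : Summable (fun n : ℕ => ε / ((m : ℝ) + n)) := by
    refine Summable.of_nonneg_of_le (fun n => by positivity) hle hsum
  have hsum3 : Summable (fun n : ℕ => ((m : ℝ) + n)⁻¹) := by
    have := hsum2.mul_left ε⁻¹
    refine this.congr fun n => ?_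
    field_simp
  set m' : ℕ := m.toNat with hm'
  have hmm' : (m : ℝ) = (m' : ℝ) := by
    have : (m' : ℤ) = m := Int.toNat_of_nonneg (by omega)
    exact_mod_cast this.symm
  have hsum4 : Summable (fun n : ℕ => ((n + m' : ℕ) : ℝ)⁻¹) := by
    refine hsum3.congr fun n => ?_
    rw [hmm']
    push_cast
    ring_nf
  have := (summable_nat_add_iff (f := fun n : ℕ => ((n : ℝ))⁻¹) m').mp hsum4
  exact Real.not_summable_natCast_inv this

private lemma summable_normsq (e : HilbertBasis ℤ ℂ H) (x : H) :
    Summable (fun k : ℤ => ‖⟪e k, x⟫‖ ^ 2) := by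
  have h := e.summable_inner_mul_inner x x
  have heq : (fun k : ℤ => ⟪x, e k⟫ * ⟪e k, x⟫)
      = fun k => ((‖⟪e k, x⟫‖ ^ 2 : ℝ) : ℂ) := by
    funext k
    rw [← inner_conj_symm x (e k), RCLike.conj_mul]
    norm_cast
  rw [heq] at h
  exact Complex.summable_ofReal.mp h

/-- Let `T` be the bilateral shift on `ℓ²(ℤ)`, `A` the position operator
and `B` the (self-adjoint closure of the) conjugate operator `TA + AT*`. If `γ` is a bounded
sequence with `sup_k |k (γ_{k+1} - γ_k)| < ∞`, then the diagonal operator `D_γ` belongs to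
`C¹(TA + AT*)`, with `ad_{TA+AT*}(D_γ) = T·D_{x(γ - Sγ)} + D_{x(Sγ - γ)}·T*`. -/
theorem diagonal_C1_of_conjugate_operator
    (e : HilbertBasis ℤ ℂ H)
    (T : H →L[ℂ] H) (hT : IsUnitaryCLM T)
    (hTe : ∀ k : ℤ, T (e k) = e (k + 1))
    (γ : ℤ → ℂ)
    (hγbdd : ∃ M : ℝ, ∀ k : ℤ, ‖γ k‖ ≤ M)
    (hγ : ∃ M : ℝ, ∀ k : ℤ, ‖(k : ℂ) * (γ (k + 1) - γ k)‖ ≤ M)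
    (Dγ : H →L[ℂ] H) (hDγ : ∀ k : ℤ, Dγ (e k) = γ k • e k)
    -- `B` is the conjugate operator `TA + AT*`
    (B : H →ₗ.[ℂ] H) (hBsa : IsSelfAdjoint B)
    (hBe : ∀ k : ℤ, e k ∈ B.domain)
    (hBval : ∀ (ψ : B.domain) (k : ℤ),
      ⟪e k, B ψ⟫ = ((k : ℂ) - 1) * ⟪e (k - 1), (ψ : H)⟫ + (k : ℂ) * ⟪e (k + 1), (ψ : H)⟫)
    -- the diagonal operators `D_{x(γ - Sγ)}` and `D_{x(Sγ - γ)}`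
    (D1 D2 : H →L[ℂ] H)
    (hD1 : ∀ k : ℤ, D1 (e k) = ((k : ℂ) * (γ k - γ (k + 1))) • e k)
    (hD2 : ∀ k : ℤ, D2 (e k) = ((k : ℂ) * (γ (k + 1) - γ k)) • e k) :
    HasCommutator B Dγ (T ∘L D1 + D2 ∘L adjoint T) := by
  obtain ⟨Mγ, hMγ⟩ := hγbdd
  have hMγ0 : 0 ≤ Mγ := le_trans (norm_nonneg _) (hMγ 0)
  intro φ ψ
  set a : ℤ → ℂ := fun k => ⟪e k, (φ : H)⟫ with ha
  set b : ℤ → ℂ := fun k => ⟪e k, (ψ : H)⟫ with hb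
  -- matrix elements of the various operators
  have hTinner : ∀ (k : ℤ) (x : H), ⟪e k, T x⟫ = ⟪e (k - 1), x⟫ := by
    intro k x
    rw [← ContinuousLinearMap.adjoint_inner_left, Tadj_apply e T hT hTe]
  have hTsinner : ∀ (k : ℤ) (x : H), ⟪e k, adjoint T x⟫ = ⟪e (k + 1), x⟫ := by
    intro k x
    rw [ContinuousLinearMap.adjoint_inner_right, hTe]
  have hDγinner := inner_diag e Dγ γ hDγ
  have hD1inner := inner_diag e D1 _ hD1
  have hD2inner := inner_diag e D2 _ hD2
  -- the three coefficient sequences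
  set f : ℤ → ℂ := fun k =>
    ((((k : ℂ) - 1) * (starRingEnd ℂ) (a (k - 1)) + (k : ℂ) * (starRingEnd ℂ) (a (k + 1))))
      * (γ k * b k) with hf
  set g : ℤ → ℂ := fun k =>
    (starRingEnd ℂ) (a k) * (γ k * (((k : ℂ) - 1) * b (k - 1) + (k : ℂ) * b (k + 1))) with hg
  set h : ℤ → ℂ := fun k =>
    (starRingEnd ℂ) (a k) * (((k : ℂ) - 1) * (γ (k - 1) - γ k) * b (k - 1)
      + (k : ℂ) * (γ (k + 1) - γ k) * b (k + 1)) with hh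
  have hfS : HasSum f ⟪B φ, Dγ (ψ : H)⟫ := by
    have h0 := e.hasSum_inner_mul_inner (B φ) (Dγ (ψ : H))
    refine h0.congr_fun fun k => ?_
    rw [← inner_conj_symm (B φ) (e k), hBval φ k, hDγinner k]
    simp only [hf, ha, hb, map_add, map_mul, map_sub, map_one, map_intCast]
  have hgS : HasSum g ⟪(φ : H), Dγ (B ψ)⟫ := by
    have h0 := e.hasSum_inner_mul_inner (φ : H) (Dγ (B ψ))
    refine h0.congr_fun fun k => ?_
    rw [hDγinner k, hBval ψ k, ← inner_conj_symm ((φ : H)) (e k)]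
  have hhS : HasSum h ⟪(φ : H), (T ∘L D1 + D2 ∘L adjoint T) (ψ : H)⟫ := by
    have h0 := e.hasSum_inner_mul_inner (φ : H) ((T ∘L D1 + D2 ∘L adjoint T) (ψ : H))
    refine h0.congr_fun fun k => ?_
    have : ⟪e k, (T ∘L D1 + D2 ∘L adjoint T) (ψ : H)⟫
        = ((k : ℂ) - 1) * (γ (k - 1) - γ k) * b (k - 1)
          + (k : ℂ) * (γ (k + 1) - γ k) * b (k + 1) := by
      rw [ContinuousLinearMap.add_apply, inner_add_right, ContinuousLinearMap.comp_apply,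
        ContinuousLinearMap.comp_apply, hTinner k, hD1inner, hD2inner, hTsinner]
      rw [show k - 1 + 1 = k from by ring]
      push_cast
      ring
    rw [this, ← inner_conj_symm ((φ : H)) (e k)]
  -- the telescoping sequence
  set t : ℤ → ℂ := fun k => (k : ℂ) * γ (k + 1) * (starRingEnd ℂ) (a k) * b (k + 1)
    - (k : ℂ) * γ k * (starRingEnd ℂ) (a (k + 1)) * b k with hht
  have hu : ∀ k : ℤ, f k - g k - h k = t (k - 1) - t k := by
    intro k
    simp only [hf, hg, hh, hht]
    rw [show k - 1 + 1 = k from by ring]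
    push_cast
    ring
  have husum : Summable (fun k => t (k - 1) - t k) :=
    ((hfS.summable.sub hgS.summable).sub hhS.summable).congr hu
  -- reduce to showing the telescoping sum vanishes
  have hkey : ∑' k, (t (k - 1) - t k) = 0 := by
    have hsa : Summable (fun k : ℤ => ‖a k‖ ^ 2) := summable_normsq e (φ : H)
    have hsb : Summable (fun k : ℤ => ‖b k‖ ^ 2) := summable_normsq e (ψ : H)
    have hsa' : Summable (fun k : ℤ => ‖a (k + 1)‖ ^ 2) :=
      ((Equiv.addRight (1 : ℤ)).summable_iff (f := fun k : ℤ => ‖a k‖ ^ 2)).mpr hsa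
    have hsb' : Summable (fun k : ℤ => ‖b (k + 1)‖ ^ 2) :=
      ((Equiv.addRight (1 : ℤ)).summable_iff (f := fun k : ℤ => ‖b k‖ ^ 2)).mpr hsb
    set d : ℤ → ℝ := fun k => ‖a k‖ * ‖b (k + 1)‖ + ‖a (k + 1)‖ * ‖b k‖ with hd
    have hdnn : ∀ k, 0 ≤ d k := fun k => by positivity
    have hdsum : Summable d := by
      refine Summable.of_nonneg_of_le hdnn (fun k => ?_)
        ((hsa.add hsb').add (hsa'.add hsb))
      simp only [hd]
      nlinarith [sq_nonneg (‖a k‖ - ‖b (k + 1)‖), sq_nonneg (‖a (k + 1)‖ - ‖b k‖),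
        norm_nonneg (a k), norm_nonneg (b k), norm_nonneg (a (k + 1)), norm_nonneg (b (k + 1))]
    have htb : ∀ k : ℤ, ‖t k‖ ≤ Mγ * (|(k : ℝ)| * d k) := by
      intro k
      have h1 : ‖t k‖ ≤ ‖(k : ℂ) * γ (k + 1) * (starRingEnd ℂ) (a k) * b (k + 1)‖
          + ‖(k : ℂ) * γ k * (starRingEnd ℂ) (a (k + 1)) * b k‖ := norm_sub_le _ _
      have hk : ‖((k : ℤ) : ℂ)‖ = |(k : ℝ)| := by
        rw [show ((k : ℤ) : ℂ) = ((k : ℝ) : ℂ) from by push_cast; ring, Complex.norm_real,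
          Real.norm_eq_abs]
      simp only [norm_mul, RCLike.norm_conj, hk] at h1
      have hprod1 : (0 : ℝ) ≤ |(k : ℝ)| * (‖a k‖ * ‖b (k + 1)‖) := by positivity
      have hprod2 : (0 : ℝ) ≤ |(k : ℝ)| * (‖a (k + 1)‖ * ‖b k‖) := by positivity
      have h2 : |(k : ℝ)| * ‖γ (k + 1)‖ * ‖a k‖ * ‖b (k + 1)‖
          ≤ Mγ * (|(k : ℝ)| * (‖a k‖ * ‖b (k + 1)‖)) := by
        nlinarith [mul_nonneg (sub_nonneg.mpr (hMγ (k + 1))) hprod1]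
      have h3 : |(k : ℝ)| * ‖γ k‖ * ‖a (k + 1)‖ * ‖b k‖
          ≤ Mγ * (|(k : ℝ)| * (‖a (k + 1)‖ * ‖b k‖)) := by
        nlinarith [mul_nonneg (sub_nonneg.mpr (hMγ k)) hprod2]
      have h4 : Mγ * (|(k : ℝ)| * d k) = Mγ * (|(k : ℝ)| * (‖a k‖ * ‖b (k + 1)‖))
          + Mγ * (|(k : ℝ)| * (‖a (k + 1)‖ * ‖b k‖)) := by
        simp only [hd]; ring
      linarith
    have hnorm : ∀ ε : ℝ, 0 < ε → ‖∑' k, (t (k - 1) - t k)‖ ≤ ε := by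
      intro ε hε
      set S : ℂ := ∑' k, (t (k - 1) - t k) with hS
      set ε' : ℝ := ε / (3 * (Mγ + 1)) with hε'
      have hε'pos : 0 < ε' := by positivity
      obtain ⟨F0, hF0⟩ := Metric.tendsto_atTop.mp husum.hasSum (ε / 3) (by positivity)
      set P : ℕ := F0.sup (fun x => x.natAbs + 1) with hP
      have hPmem : ∀ x ∈ F0, x.natAbs + 1 ≤ P :=
        fun x hx => Finset.le_sup (f := fun x : ℤ => x.natAbs + 1) hx
      obtain ⟨N, hNP, hN1, hNd⟩ := exists_int_mul_small d hdsum hdnn hε'pos (max (P : ℤ) 1)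
      obtain ⟨N', hN'P, hN'1, hN'd⟩ := exists_int_mul_small (fun k => d (-k))
          (((Equiv.neg ℤ).summable_iff (f := d)).mpr hdsum) (fun k => hdnn _) hε'pos
          (max ((P : ℤ) + 1) 1)
      set m : ℤ := -N' with hm
      have hmN : m ≤ N := by omega
      have hsub : F0 ⊆ Finset.Icc (m + 1) N := by
        intro x hx
        have h1 := hPmem x hx
        simp only [Finset.mem_Icc]
        omega
      have hdist := hF0 (Finset.Icc (m + 1) N) (Finset.le_iff_subset.mpr hsub)
      rw [sum_telescope_Icc t m N hmN, dist_eq_norm] at hdist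
      have hNreal : (0 : ℝ) < (N : ℝ) := by exact_mod_cast (by omega : (0 : ℤ) < N)
      have hN'real : (0 : ℝ) < (N' : ℝ) := by exact_mod_cast (by omega : (0 : ℤ) < N')
      have hεne : Mγ + 1 ≠ 0 := by linarith
      have hεeq : (Mγ + 1) * ε' = ε / 3 := by
        rw [hε']
        field_simp
      have htN : ‖t N‖ ≤ ε / 3 := by
        have hb1 := htb N
        rw [abs_of_pos hNreal] at hb1
        nlinarith [hdnn N, hNd]
      have htm : ‖t m‖ ≤ ε / 3 := by
        have hb1 := htb m
        have : |((m : ℤ) : ℝ)| = (N' : ℝ) := by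
          rw [hm]; push_cast; rw [abs_neg, abs_of_pos hN'real]
        rw [this] at hb1
        nlinarith [hdnn m, hN'd]
      have h5 : ‖S‖ ≤ ‖t m - t N - S‖ + ‖t m - t N‖ := by
        calc ‖S‖ = ‖(t m - t N) - (t m - t N - S)‖ := by rw [sub_sub_cancel]
          _ ≤ ‖t m - t N‖ + ‖t m - t N - S‖ := norm_sub_le _ _
          _ = ‖t m - t N - S‖ + ‖t m - t N‖ := by ring
      have h6 : ‖t m - t N‖ ≤ ‖t m‖ + ‖t N‖ := norm_sub_le _ _
      linarith
    have h0 : ‖∑' k, (t (k - 1) - t k)‖ ≤ 0 :=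
      le_of_forall_pos_le_add fun ε hε => by simpa using hnorm ε hε
    exact norm_le_zero_iff.mp h0
  have h1 := ((hfS.sub hgS).sub hhS).tsum_eq
  rw [tsum_congr hu] at h1
  rw [hkey] at h1
  linear_combination h1.symm
end
end
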